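/- arXiv:2005.01650 — 5 statements merged into one kernel-verified Lean document; each statement's English description precedes it below -/
import Mathlib

section
/- For every ε > 0, t > 0 and x ∈ ℝ, one has ∫_ℝ R_ε(t,x,y)² dy ≤ √(3/(8π)) · t^{−1/2}. -/
open MeasureTheory Real

/-- The Gaussian heat kernel `G(t,x,y) = (2πt)^{-1/2} exp(-(x-y)²/(2t))` for `t > 0`,
and `0` for `t ≤ 0`. -/
noncomputable def heatKernel (t x y : ℝ) : ℝ :=
  if 0 < t then (1 / Real.sqrt (2 * Real.pi * t)) * Real.exp (-(x - y) ^ 2 / (2 * t)) else 0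

/-- `R_ε(t,x,y) = e^{-t/ε} ∑_{n=1}^∞ ((t/ε)^n / n!) G(nε, x, y)`. -/
noncomputable def Reps (ε t x y : ℝ) : ℝ :=
  Real.exp (-t / ε) *
    ∑' n : ℕ, ((t / ε) ^ (n + 1) / (Nat.factorial (n + 1) : ℝ)) *
      heatKernel (((n : ℝ) + 1) * ε) x y

namespace RepsAux


lemma hk_eq {t : ℝ} (ht : 0 < t) (x y : ℝ) :
    heatKernel t x y = (1 / Real.sqrt (2 * π * t)) * Real.exp (-(x - y) ^ 2 / (2 * t)) :=
  if_pos ht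

lemma hk_nonneg (t x y : ℝ) : 0 ≤ heatKernel t x y := by
  unfold heatKernel; split
  · positivity
  · exact le_refl 0

lemma hk_meas (t x : ℝ) : Measurable (fun y => heatKernel t x y) := by
  unfold heatKernel; split
  · exact (measurable_const.mul (((measurable_const.sub measurable_id).pow_const 2).neg.div_const _).exp)
  · exact measurable_const

lemma hk_le {t : ℝ} (ht : 0 < t) (x y : ℝ) : heatKernel t x y ≤ 1 / Real.sqrt (2 * π * t) := by
  rw [hk_eq ht]
  have h1 : Real.exp (-(x - y) ^ 2 / (2 * t)) ≤ 1 := by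
    apply Real.exp_le_one_iff.mpr
    apply div_nonpos_of_nonpos_of_nonneg (by nlinarith [sq_nonneg (x-y)]) (by positivity)
  have h2 : (0:ℝ) ≤ 1 / Real.sqrt (2 * π * t) := by positivity
  nlinarith

lemma integral_exp_shift {b : ℝ} (x : ℝ) :
    ∫ y : ℝ, Real.exp (-b * (x - y) ^ 2) = Real.sqrt (π / b) := by
  rw [integral_sub_left_eq_self (fun z => Real.exp (-b * z ^ 2)) volume x]
  exact integral_gaussian b

lemma hk_mul {s r : ℝ} (hs : 0 < s) (hr : 0 < r) (x y : ℝ) :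
    heatKernel s x y * heatKernel r x y
      = (1 / Real.sqrt (2 * π * s)) * (1 / Real.sqrt (2 * π * r)) *
          Real.exp (-((s + r) / (2 * s * r)) * (x - y) ^ 2) := by
  rw [hk_eq hs, hk_eq hr]
  rw [show (1 / Real.sqrt (2*π*s)) * Real.exp (-(x - y) ^ 2 / (2 * s)) *
      ((1 / Real.sqrt (2*π*r)) * Real.exp (-(x - y) ^ 2 / (2 * r)))
      = (1 / Real.sqrt (2*π*s)) * (1 / Real.sqrt (2*π*r)) *
        (Real.exp (-(x - y) ^ 2 / (2 * s)) * Real.exp (-(x - y) ^ 2 / (2 * r))) by ring]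
  rw [← Real.exp_add]
  congr 2
  field_simp
  ring

lemma hk_mul_integrable {s r : ℝ} (hs : 0 < s) (hr : 0 < r) (x : ℝ) :
    Integrable (fun y => heatKernel s x y * heatKernel r x y) := by
  have hb : 0 < (s + r) / (2 * s * r) := by positivity
  have : Integrable (fun y : ℝ => Real.exp (-((s + r) / (2 * s * r)) * (x - y) ^ 2)) :=
    (integrable_exp_neg_mul_sq hb).comp_sub_left x
  have := this.const_mul ((1 / Real.sqrt (2 * π * s)) * (1 / Real.sqrt (2 * π * r)))
  apply this.congr
  filter_upwards with y
  rw [hk_mul hs hr]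

lemma hk_mul_integral {s r : ℝ} (hs : 0 < s) (hr : 0 < r) (x : ℝ) :
    (∫ y : ℝ, heatKernel s x y * heatKernel r x y) = 1 / Real.sqrt (2 * π * (s + r)) := by
  simp_rw [hk_mul hs hr]
  rw [integral_const_mul, integral_exp_shift]
  have hπ := Real.pi_pos
  rw [one_div, one_div, ← Real.sqrt_inv, ← Real.sqrt_inv, ← Real.sqrt_mul (by positivity),
    ← Real.sqrt_mul (by positivity), one_div, ← Real.sqrt_inv]
  congr 1
  field_simp



lemma sum_pow_div_factorial_le {x : ℝ} (hx : 0 ≤ x) (s : Finset ℕ) :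
    ∑ n ∈ s, x ^ n / (Nat.factorial n : ℝ) ≤ Real.exp x := by
  classical
  have hsub : s ⊆ Finset.range (s.sup id + 1) := fun n hn =>
    Finset.mem_range.2 (Nat.lt_succ_of_le (Finset.le_sup (f := id) hn))
  calc ∑ n ∈ s, x ^ n / (Nat.factorial n : ℝ)
      ≤ ∑ n ∈ Finset.range (s.sup id + 1), x ^ n / (Nat.factorial n : ℝ) :=
        Finset.sum_le_sum_of_subset_of_nonneg hsub (fun i _ _ => by positivity)
    _ ≤ Real.exp x := Real.sum_le_exp_of_nonneg hx _

lemma sum_a_le {lam : ℝ} (hlam : 0 ≤ lam) (s : Finset ℕ) :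
    ∑ n ∈ s, lam ^ (n+1) / (Nat.factorial (n+1) : ℝ) ≤ Real.exp lam := by
  classical
  rw [← Finset.sum_image (g := fun n : ℕ => n + 1)
    (f := fun j => lam ^ j / (Nat.factorial j : ℝ)) (by intro a _ b _ h; simpa using h)]
  exact sum_pow_div_factorial_le hlam _

lemma tsum_ofReal_le {ι : Type*} (f : ι → ℝ) (C : ℝ)
    (h : ∀ s : Finset ι, ∑ i ∈ s, f i ≤ C) (hf : ∀ i, 0 ≤ f i) :
    ∑' i, ENNReal.ofReal (f i) ≤ ENNReal.ofReal C := by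
  rw [ENNReal.tsum_eq_iSup_sum]
  refine iSup_le fun s => ?_
  rw [← ENNReal.ofReal_sum_of_nonneg (fun i _ => hf i)]
  exact ENNReal.ofReal_le_ofReal (h s)

lemma sum_antidiagonal_inv_fact (N : ℕ) :
    ∑ p ∈ Finset.HasAntidiagonal.antidiagonal N, (1:ℝ) / ((Nat.factorial p.1 : ℝ) * (Nat.factorial p.2 : ℝ))
      = 2 ^ N / (Nat.factorial N : ℝ) := by
  rw [Finset.Nat.sum_antidiagonal_eq_sum_range_succ
    (fun k l => (1:ℝ) / ((Nat.factorial k : ℝ) * (Nat.factorial l : ℝ)))]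
  have h : ∀ k ∈ Finset.range (N+1),
      (1:ℝ) / ((Nat.factorial k : ℝ) * (Nat.factorial (N-k) : ℝ))
        = (N.choose k : ℝ) / (Nat.factorial N : ℝ) := by
    intro k hk
    have hkN : k ≤ N := Nat.lt_succ_iff.mp (Finset.mem_range.1 hk)
    have hcast : (N.choose k : ℝ) * (Nat.factorial k : ℝ) * (Nat.factorial (N-k) : ℝ)
        = (Nat.factorial N : ℝ) := by
      exact_mod_cast congrArg (Nat.cast : ℕ → ℝ) (Nat.choose_mul_factorial_mul_factorial hkN)
    have h1 : (Nat.factorial k : ℝ) ≠ 0 := Nat.cast_ne_zero.2 (Nat.factorial_ne_zero k)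
    have h2 : (Nat.factorial (N-k) : ℝ) ≠ 0 := Nat.cast_ne_zero.2 (Nat.factorial_ne_zero _)
    have h3 : (Nat.factorial N : ℝ) ≠ 0 := Nat.cast_ne_zero.2 (Nat.factorial_ne_zero N)
    field_simp
    linarith [hcast]
  rw [Finset.sum_congr rfl h, ← Finset.sum_div]
  congr 1
  rw [← Nat.cast_sum, Nat.sum_range_choose]
  push_cast
  ring

lemma sum_antidiagonal_shift_le (N : ℕ) :
    ∑ p ∈ Finset.HasAntidiagonal.antidiagonal N,
        (1:ℝ) / ((Nat.factorial (p.1+1) : ℝ) * (Nat.factorial (p.2+1) : ℝ))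
      ≤ 2 ^ (N+2) / (Nat.factorial (N+2) : ℝ) := by
  classical
  rw [← sum_antidiagonal_inv_fact (N+2)]
  rw [← Finset.sum_image (g := fun p : ℕ × ℕ => (p.1+1, p.2+1))
    (f := fun q : ℕ × ℕ => (1:ℝ) / ((Nat.factorial q.1 : ℝ) * (Nat.factorial q.2 : ℝ)))
    (by intro a _ b _ h; simpa [Prod.ext_iff] using h)]
  apply Finset.sum_le_sum_of_subset_of_nonneg
  · intro q hq
    simp only [Finset.mem_image] at hq
    obtain ⟨p, hp, rfl⟩ := hq
    simp only [Finset.HasAntidiagonal.mem_antidiagonal] at hp ⊢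
    omega
  · intro i _ _; positivity

lemma key_finite {lam : ℝ} (hlam : 0 < lam) (s : Finset (ℕ × ℕ)) :
    ∑ p ∈ s, 2 * lam * (lam ^ (p.1+1) / (Nat.factorial (p.1+1) : ℝ)
        * (lam ^ (p.2+1) / (Nat.factorial (p.2+1) : ℝ)) / ((p.1:ℝ) + (p.2:ℝ) + 3))
      ≤ Real.exp (2 * lam) := by
  classical
  set T : ℕ × ℕ → ℝ := fun p => 2 * lam * (lam ^ (p.1+1) / (Nat.factorial (p.1+1) : ℝ)
        * (lam ^ (p.2+1) / (Nat.factorial (p.2+1) : ℝ)) / ((p.1:ℝ) + (p.2:ℝ) + 3)) with hT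
  have hTnonneg : ∀ p, 0 ≤ T p := by
    intro p; rw [hT]; positivity
  set M := s.sup (fun p => p.1 + p.2) + 1 with hM
  have hsub : s ⊆ (Finset.range M).biUnion (fun N => Finset.HasAntidiagonal.antidiagonal N) := by
    intro p hp
    exact Finset.mem_biUnion.2 ⟨p.1 + p.2,
      Finset.mem_range.2 (Nat.lt_succ_of_le (Finset.le_sup (f := fun p : ℕ × ℕ => p.1 + p.2) hp)),
      Finset.HasAntidiagonal.mem_antidiagonal.2 rfl⟩
  have hdisj : (↑(Finset.range M) : Set ℕ).PairwiseDisjoint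
      (fun N => (Finset.HasAntidiagonal.antidiagonal N : Finset (ℕ × ℕ))) := by
    intro a _ b _ hab
    refine Finset.disjoint_left.2 fun p hpa hpb => hab ?_
    rw [← Finset.HasAntidiagonal.mem_antidiagonal.1 hpa, Finset.HasAntidiagonal.mem_antidiagonal.1 hpb]
  calc ∑ p ∈ s, T p
      ≤ ∑ p ∈ (Finset.range M).biUnion (fun N => Finset.HasAntidiagonal.antidiagonal N), T p :=
        Finset.sum_le_sum_of_subset_of_nonneg hsub (fun i _ _ => hTnonneg i)
    _ = ∑ N ∈ Finset.range M, ∑ p ∈ Finset.HasAntidiagonal.antidiagonal N, T p := Finset.sum_biUnion hdisj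
    _ ≤ ∑ N ∈ Finset.range M, (2*lam) ^ (N+3) / (Nat.factorial (N+3) : ℝ) := by
        apply Finset.sum_le_sum
        intro N _
        have hinner : ∀ p ∈ Finset.HasAntidiagonal.antidiagonal N,
            T p = (2 * lam ^ (N+3) / ((N:ℝ) + 3)) *
              ((1:ℝ) / ((Nat.factorial (p.1+1) : ℝ) * (Nat.factorial (p.2+1) : ℝ))) := by
          intro p hp
          have h1 : p.1 + p.2 = N := Finset.HasAntidiagonal.mem_antidiagonal.1 hp
          have hcast : (p.1:ℝ) + (p.2:ℝ) + 3 = (N:ℝ) + 3 := by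
            rw [← h1]; push_cast; ring
          have hpow : lam ^ (p.1+1) * lam ^ (p.2+1) = lam ^ (N+2) := by
            rw [← pow_add]; congr 1; omega
          have hfa : (Nat.factorial (p.1+1) : ℝ) ≠ 0 := Nat.cast_ne_zero.2 (Nat.factorial_ne_zero _)
          have hfb : (Nat.factorial (p.2+1) : ℝ) ≠ 0 := Nat.cast_ne_zero.2 (Nat.factorial_ne_zero _)
          have hN3 : ((N:ℝ) + 3) ≠ 0 := by positivity
          rw [hT]
          simp only
          rw [hcast]
          field_simp
          rw [show lam ^ (N+3) = lam ^ (N+2) * lam by ring, ← hpow]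
          ring
        rw [Finset.sum_congr rfl hinner, ← Finset.mul_sum]
        have hle := sum_antidiagonal_shift_le N
        have hc : 0 ≤ 2 * lam ^ (N+3) / ((N:ℝ) + 3) := by positivity
        calc (2 * lam ^ (N+3) / ((N:ℝ) + 3)) *
              (∑ p ∈ Finset.HasAntidiagonal.antidiagonal N,
                (1:ℝ) / ((Nat.factorial (p.1+1) : ℝ) * (Nat.factorial (p.2+1) : ℝ)))
            ≤ (2 * lam ^ (N+3) / ((N:ℝ) + 3)) * (2 ^ (N+2) / (Nat.factorial (N+2) : ℝ)) :=
              mul_le_mul_of_nonneg_left hle hc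
          _ = (2*lam) ^ (N+3) / (Nat.factorial (N+3) : ℝ) := by
              have hfact : (Nat.factorial (N+3) : ℝ) = ((N:ℝ)+3) * (Nat.factorial (N+2) : ℝ) := by
                rw [show N+3 = (N+2)+1 by ring, Nat.factorial_succ]
                push_cast; ring
              have hf2 : (Nat.factorial (N+2) : ℝ) ≠ 0 := Nat.cast_ne_zero.2 (Nat.factorial_ne_zero _)
              have hN3 : ((N:ℝ) + 3) ≠ 0 := by positivity
              rw [hfact, mul_pow]
              field_simp
              ring
    _ ≤ Real.exp (2 * lam) := by
        rw [← Finset.sum_image (g := fun N : ℕ => N + 3)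
          (f := fun j => (2*lam) ^ j / (Nat.factorial j : ℝ)) (by intro a _ b _ h; simpa using h)]
        exact sum_pow_div_factorial_le (by positivity) _



lemma term_bound {lam ε K : ℝ} (hlam : 0 < lam) (hε : 0 < ε) (hK2 : 2 ≤ K)
    {c : ℝ} (hc : 0 ≤ c) :
    c * (1 / Real.sqrt (2 * π * (K * ε)))
      ≤ Real.sqrt (3/2) / (2 * Real.sqrt (2 * π * ε) * Real.sqrt (2 * lam)) *
          (2 * lam * (c / (K + 1)) + c) := by
  have hπ := Real.pi_pos
  have hK0 : (0:ℝ) < K := by linarith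
  have hsplit : Real.sqrt (2 * π * (K * ε)) = Real.sqrt (2 * π * ε) * Real.sqrt K := by
    rw [show 2 * π * (K * ε) = (2 * π * ε) * K by ring, Real.sqrt_mul (by positivity)]
  have hsK : 0 < Real.sqrt K := Real.sqrt_pos.2 hK0
  have hsK1 : 0 < Real.sqrt (K + 1) := Real.sqrt_pos.2 (by linarith)
  have hsL : 0 < Real.sqrt (2 * lam) := Real.sqrt_pos.2 (by linarith)
  have hsA : 0 < Real.sqrt (2 * π * ε) := Real.sqrt_pos.2 (by positivity)
  have h2 : 1 / Real.sqrt K ≤ Real.sqrt (3/2) / Real.sqrt (K + 1) := by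
    rw [div_le_div_iff₀ hsK hsK1, one_mul]
    calc Real.sqrt (K + 1) ≤ Real.sqrt ((3/2) * K) := Real.sqrt_le_sqrt (by linarith)
      _ = Real.sqrt (3/2) * Real.sqrt K := Real.sqrt_mul (by norm_num) K
  have h3 : 1 / Real.sqrt (K + 1) ≤ (2 * lam / (K + 1) + 1) / (2 * Real.sqrt (2 * lam)) := by
    have hu : 0 ≤ 2 * lam / (K + 1) := by positivity
    have husqrt : Real.sqrt (2 * lam / (K + 1)) * Real.sqrt (K + 1) = Real.sqrt (2 * lam) := by
      rw [← Real.sqrt_mul hu]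
      congr 1
      field_simp
    have hAM : Real.sqrt (2 * lam / (K + 1)) ≤ (2 * lam / (K + 1) + 1) / 2 := by
      nlinarith [Real.sq_sqrt hu, Real.sqrt_nonneg (2 * lam / (K + 1)),
        sq_nonneg (Real.sqrt (2 * lam / (K + 1)) - 1)]
    rw [div_le_div_iff₀ hsK1 (by positivity), one_mul]
    have h4 := mul_le_mul_of_nonneg_right hAM hsK1.le
    rw [husqrt] at h4
    nlinarith
  have hH : 1 / (Real.sqrt (2 * π * ε) * Real.sqrt K)
      ≤ Real.sqrt (3/2) / (2 * Real.sqrt (2 * π * ε) * Real.sqrt (2 * lam)) *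
          (2 * lam / (K + 1) + 1) := by
    calc 1 / (Real.sqrt (2 * π * ε) * Real.sqrt K)
        = (1 / Real.sqrt (2 * π * ε)) * (1 / Real.sqrt K) := by ring
      _ ≤ (1 / Real.sqrt (2 * π * ε)) * (Real.sqrt (3/2) / Real.sqrt (K + 1)) :=
          mul_le_mul_of_nonneg_left h2 (by positivity)
      _ = (1 / Real.sqrt (2 * π * ε)) * (Real.sqrt (3/2) * (1 / Real.sqrt (K + 1))) := by ring
      _ ≤ (1 / Real.sqrt (2 * π * ε)) *
            (Real.sqrt (3/2) * ((2 * lam / (K + 1) + 1) / (2 * Real.sqrt (2 * lam)))) := by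
          apply mul_le_mul_of_nonneg_left ?_ (by positivity)
          exact mul_le_mul_of_nonneg_left h3 (Real.sqrt_nonneg _)
      _ = Real.sqrt (3/2) / (2 * Real.sqrt (2 * π * ε) * Real.sqrt (2 * lam)) *
            (2 * lam / (K + 1) + 1) := by ring
  rw [hsplit]
  calc c * (1 / (Real.sqrt (2 * π * ε) * Real.sqrt K))
      ≤ c * (Real.sqrt (3/2) / (2 * Real.sqrt (2 * π * ε) * Real.sqrt (2 * lam)) *
          (2 * lam / (K + 1) + 1)) := mul_le_mul_of_nonneg_left hH hc
    _ = Real.sqrt (3/2) / (2 * Real.sqrt (2 * π * ε) * Real.sqrt (2 * lam)) *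
          (2 * lam * (c / (K + 1)) + c) := by ring



lemma final_const {ε t : ℝ} (hε : 0 < ε) (ht : 0 < t) :
    Real.exp (-(t/ε)) ^ 2 *
      (Real.sqrt (3/2) / (2 * Real.sqrt (2 * π * ε) * Real.sqrt (2 * (t/ε))) *
        (Real.exp (2 * (t/ε)) + Real.exp (t/ε) * Real.exp (t/ε)))
      = Real.sqrt (3 / (8 * π)) * t ^ (-(1:ℝ)/2) := by
  have hπ := Real.pi_pos
  set lam := t / ε with hlam
  have e1 : Real.exp lam * Real.exp lam = Real.exp (2 * lam) := by
    rw [← Real.exp_add]; ring_nf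
  have e2 : Real.exp (-lam) ^ 2 = Real.exp (-(2 * lam)) := by
    rw [sq, ← Real.exp_add]; ring_nf
  rw [e1, e2]
  have e3 : Real.exp (-(2 * lam)) * (Real.sqrt (3/2) / (2 * Real.sqrt (2 * π * ε) *
      Real.sqrt (2 * lam)) * (Real.exp (2 * lam) + Real.exp (2 * lam)))
      = (Real.exp (-(2*lam)) * Real.exp (2*lam)) *
        (2 * (Real.sqrt (3/2) / (2 * Real.sqrt (2 * π * ε) * Real.sqrt (2 * lam)))) := by
    ring
  rw [e3, ← Real.exp_add, neg_add_cancel, Real.exp_zero, one_mul]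
  -- now: 2 * (√(3/2) / (2 * √(2πε) * √(2 lam))) = √(3/(8π)) * t ^ (-1/2)
  have h1 : Real.sqrt (2 * π * ε) * Real.sqrt (2 * lam) = Real.sqrt (4 * π * t) := by
    rw [← Real.sqrt_mul (by positivity)]
    congr 1
    rw [hlam]
    field_simp
    ring
  have h2 : 2 * Real.sqrt (2 * π * ε) * Real.sqrt (2 * lam) = 2 * Real.sqrt (4 * π * t) := by
    rw [mul_assoc, h1]
  rw [h2]
  have ht2 : t ^ (-(1:ℝ)/2) = (Real.sqrt t)⁻¹ := by
    rw [show (-(1:ℝ)/2) = -(1/2 : ℝ) by norm_num, Real.rpow_neg ht.le, Real.sqrt_eq_rpow]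
  rw [ht2]
  rw [show 2 * (Real.sqrt (3/2) / (2 * Real.sqrt (4 * π * t)))
      = Real.sqrt (3/2) / Real.sqrt (4 * π * t) by ring]
  rw [← Real.sqrt_div (by norm_num)]
  rw [show Real.sqrt (3 / (8 * π)) * (Real.sqrt t)⁻¹
      = Real.sqrt (3 / (8 * π)) / Real.sqrt t by ring]
  rw [← Real.sqrt_div (by positivity)]
  congr 1
  field_simp
  ring


end RepsAux

open RepsAux

/-- For every `ε > 0`, `t > 0` and `x ∈ ℝ`,
`∫_ℝ R_ε(t,x,y)² dy ≤ √(3/(8π)) · t^{-1/2}`. -/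
theorem Reps_sq_integral_le :
    ∀ ε > (0 : ℝ), ∀ t > (0 : ℝ), ∀ x : ℝ,
      (∫ y : ℝ, (Reps ε t x y) ^ 2) ≤ Real.sqrt (3 / (8 * Real.pi)) * t ^ (-(1:ℝ)/2) := by
  intro ε hε t ht x
  have hπ := Real.pi_pos
  have hRHS0 : 0 ≤ Real.sqrt (3 / (8 * Real.pi)) * t ^ (-(1:ℝ)/2) := by positivity
  by_cases hint : Integrable (fun y => (Reps ε t x y) ^ 2) volume
  swap
  · rw [integral_undef hint]; exact hRHS0
  set lam := t / ε with hlam_def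
  have hlam : 0 < lam := div_pos ht hε
  -- abbreviations
  have hGpos : ∀ n : ℕ, 0 < ((n : ℝ) + 1) * ε := fun n => by positivity
  have ha0 : ∀ n : ℕ, 0 ≤ lam ^ (n+1) / (Nat.factorial (n+1) : ℝ) := fun n => by positivity
  have hG0 : ∀ (n : ℕ) (y : ℝ), 0 ≤ heatKernel (((n : ℝ) + 1) * ε) x y :=
    fun n y => hk_nonneg _ _ _
  have hprod0 : ∀ (n : ℕ) (y : ℝ),
      0 ≤ lam ^ (n+1) / (Nat.factorial (n+1) : ℝ) * heatKernel (((n : ℝ) + 1) * ε) x y :=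
    fun n y => mul_nonneg (ha0 n) (hG0 n y)
  -- summability of the defining series
  have hsumm : ∀ y : ℝ, Summable (fun n : ℕ =>
      lam ^ (n+1) / (Nat.factorial (n+1) : ℝ) * heatKernel (((n : ℝ) + 1) * ε) x y) := by
    intro y
    have hmaj : Summable (fun n : ℕ =>
        lam ^ (n+1) / (Nat.factorial (n+1) : ℝ) * (1 / Real.sqrt (2 * π * ε))) := by
      apply Summable.mul_right
      exact (Real.summable_pow_div_factorial lam).comp_injective
        (fun i j h => by simpa using h)
    refine Summable.of_nonneg_of_le (fun n => hprod0 n y) (fun n => ?_) hmaj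
    refine mul_le_mul_of_nonneg_left ?_ (ha0 n)
    calc heatKernel (((n : ℝ) + 1) * ε) x y
        ≤ 1 / Real.sqrt (2 * π * (((n : ℝ) + 1) * ε)) := hk_le (hGpos n) x y
      _ ≤ 1 / Real.sqrt (2 * π * ε) := by
          apply one_div_le_one_div_of_le (Real.sqrt_pos.2 (by positivity))
          apply Real.sqrt_le_sqrt
          nlinarith [mul_nonneg (mul_nonneg (le_of_lt hπ) hε.le) (Nat.cast_nonneg (α := ℝ) n)]
  have hReps : ∀ y : ℝ, Reps ε t x y = Real.exp (-lam) *
      ∑' n : ℕ, lam ^ (n+1) / (Nat.factorial (n+1) : ℝ) * heatKernel (((n : ℝ) + 1) * ε) x y := by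
    intro y
    simp only [Reps, hlam_def, neg_div]
  -- the ENNReal-valued series
  set F : ℕ → ℝ → ENNReal := fun n y =>
    ENNReal.ofReal (lam ^ (n+1) / (Nat.factorial (n+1) : ℝ) * heatKernel (((n : ℝ) + 1) * ε) x y)
    with hF_def
  have hFmeas : ∀ n, Measurable (F n) := by
    intro n
    rw [hF_def]
    exact ((hk_meas (((n : ℝ) + 1) * ε) x).const_mul _).ennreal_ofReal
  have hpt : ∀ y : ℝ, ENNReal.ofReal ((Reps ε t x y) ^ 2)
      = ENNReal.ofReal (Real.exp (-lam)) ^ 2 * ∑' n : ℕ, ∑' m : ℕ, F n y * F m y := by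
    intro y
    rw [hReps y, mul_pow, ENNReal.ofReal_mul (by positivity),
      ENNReal.ofReal_pow (Real.exp_nonneg _),
      ENNReal.ofReal_pow (tsum_nonneg (fun n => hprod0 n y))]
    congr 1
    rw [ENNReal.ofReal_tsum_of_nonneg (fun n => hprod0 n y) (hsumm y), sq,
      ← ENNReal.tsum_mul_right]
    exact tsum_congr fun n => (ENNReal.tsum_mul_left).symm
  -- value of each cross term
  have hterm : ∀ n m : ℕ, (∫⁻ y : ℝ, F n y * F m y)
      = ENNReal.ofReal (lam ^ (n+1) / (Nat.factorial (n+1) : ℝ) *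
          (lam ^ (m+1) / (Nat.factorial (m+1) : ℝ)))
        * ENNReal.ofReal (1 / Real.sqrt (2 * π * (((n:ℝ) + (m:ℝ) + 2) * ε))) := by
    intro n m
    have h1 : ∀ y : ℝ, F n y * F m y
        = ENNReal.ofReal (lam ^ (n+1) / (Nat.factorial (n+1) : ℝ) *
            (lam ^ (m+1) / (Nat.factorial (m+1) : ℝ)))
          * ENNReal.ofReal (heatKernel (((n : ℝ) + 1) * ε) x y *
              heatKernel (((m : ℝ) + 1) * ε) x y) := by
      intro y
      rw [hF_def]
      simp only
      rw [← ENNReal.ofReal_mul (mul_nonneg (ha0 n) (ha0 m)),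
        ← ENNReal.ofReal_mul (hprod0 n y)]
      congr 1
      ring
    simp_rw [h1]
    rw [lintegral_const_mul' _ _ ENNReal.ofReal_ne_top]
    congr 1
    rw [← MeasureTheory.ofReal_integral_eq_lintegral_ofReal
      (hk_mul_integrable (hGpos n) (hGpos m) x)
      (Filter.Eventually.of_forall (fun y => mul_nonneg (hG0 n y) (hG0 m y)))]
    rw [hk_mul_integral (hGpos n) (hGpos m) x]
    congr 2
    push_cast
    ring
  -- rewrite the integral via lintegral
  rw [MeasureTheory.integral_eq_lintegral_of_nonneg_ae
    (Filter.Eventually.of_forall (fun y => sq_nonneg _)) hint.aestronglyMeasurable]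
  apply ENNReal.toReal_le_of_le_ofReal hRHS0
  -- main chain
  set C0 : ℝ := Real.sqrt (3/2) / (2 * Real.sqrt (2 * π * ε) * Real.sqrt (2 * lam)) with hC0_def
  have hC0 : 0 ≤ C0 := by rw [hC0_def]; positivity
  -- the double sum bound
  have hDS : (∑' n : ℕ, ∑' m : ℕ,
        ENNReal.ofReal (lam ^ (n+1) / (Nat.factorial (n+1) : ℝ) *
            (lam ^ (m+1) / (Nat.factorial (m+1) : ℝ)))
          * ENNReal.ofReal (1 / Real.sqrt (2 * π * (((n:ℝ) + (m:ℝ) + 2) * ε))))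
      ≤ ENNReal.ofReal C0 *
          (ENNReal.ofReal (Real.exp (2 * lam)) +
           ENNReal.ofReal (Real.exp lam * Real.exp lam)) := by
    have hstep : ∀ n m : ℕ,
        ENNReal.ofReal (lam ^ (n+1) / (Nat.factorial (n+1) : ℝ) *
            (lam ^ (m+1) / (Nat.factorial (m+1) : ℝ)))
          * ENNReal.ofReal (1 / Real.sqrt (2 * π * (((n:ℝ) + (m:ℝ) + 2) * ε)))
        ≤ ENNReal.ofReal C0 *
            (ENNReal.ofReal (2 * lam * (lam ^ (n+1) / (Nat.factorial (n+1) : ℝ) *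
                (lam ^ (m+1) / (Nat.factorial (m+1) : ℝ)) / ((n:ℝ) + (m:ℝ) + 3)))
             + ENNReal.ofReal (lam ^ (n+1) / (Nat.factorial (n+1) : ℝ) *
                (lam ^ (m+1) / (Nat.factorial (m+1) : ℝ)))) := by
      intro n m
      rw [← ENNReal.ofReal_mul (mul_nonneg (ha0 n) (ha0 m)),
        ← ENNReal.ofReal_add
          (mul_nonneg (by positivity) (div_nonneg (mul_nonneg (ha0 n) (ha0 m)) (by positivity)))
          (mul_nonneg (ha0 n) (ha0 m)),
        ← ENNReal.ofReal_mul hC0]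
      apply ENNReal.ofReal_le_ofReal
      have hK2 : (2:ℝ) ≤ (n:ℝ) + (m:ℝ) + 2 := by
        have := Nat.cast_nonneg (α := ℝ) n; have := Nat.cast_nonneg (α := ℝ) m; linarith
      have := term_bound hlam hε hK2 (mul_nonneg (ha0 n) (ha0 m))
      rw [show (n:ℝ) + (m:ℝ) + 2 + 1 = (n:ℝ) + (m:ℝ) + 3 by ring] at this
      rw [hC0_def]
      exact this
    calc (∑' n : ℕ, ∑' m : ℕ, _)
        ≤ ∑' n : ℕ, ∑' m : ℕ, ENNReal.ofReal C0 *
            (ENNReal.ofReal (2 * lam * (lam ^ (n+1) / (Nat.factorial (n+1) : ℝ) *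
                (lam ^ (m+1) / (Nat.factorial (m+1) : ℝ)) / ((n:ℝ) + (m:ℝ) + 3)))
             + ENNReal.ofReal (lam ^ (n+1) / (Nat.factorial (n+1) : ℝ) *
                (lam ^ (m+1) / (Nat.factorial (m+1) : ℝ)))) :=
          ENNReal.tsum_le_tsum (fun n => ENNReal.tsum_le_tsum (fun m => hstep n m))
      _ = ENNReal.ofReal C0 *
            ((∑' n : ℕ, ∑' m : ℕ, ENNReal.ofReal (2 * lam *
                (lam ^ (n+1) / (Nat.factorial (n+1) : ℝ) *
                  (lam ^ (m+1) / (Nat.factorial (m+1) : ℝ)) / ((n:ℝ) + (m:ℝ) + 3))))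
             + ∑' n : ℕ, ∑' m : ℕ, ENNReal.ofReal (lam ^ (n+1) / (Nat.factorial (n+1) : ℝ) *
                (lam ^ (m+1) / (Nat.factorial (m+1) : ℝ)))) := by
          simp_rw [ENNReal.tsum_mul_left, ENNReal.tsum_add]
      _ ≤ ENNReal.ofReal C0 *
            (ENNReal.ofReal (Real.exp (2 * lam)) +
             ENNReal.ofReal (Real.exp lam * Real.exp lam)) := by
          apply mul_le_mul_right
          apply add_le_add
          · -- P1
            rw [← ENNReal.tsum_prod'
              (f := fun p : ℕ × ℕ => ENNReal.ofReal (2 * lam *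
                (lam ^ (p.1+1) / (Nat.factorial (p.1+1) : ℝ) *
                  (lam ^ (p.2+1) / (Nat.factorial (p.2+1) : ℝ)) / ((p.1:ℝ) + (p.2:ℝ) + 3))))]
            exact tsum_ofReal_le _ _ (fun s => key_finite hlam s)
              (fun p => mul_nonneg (by positivity)
                (div_nonneg (mul_nonneg (ha0 p.1) (ha0 p.2)) (by positivity)))
          · -- P2
            have hS : (∑' n : ℕ, ENNReal.ofReal (lam ^ (n+1) / (Nat.factorial (n+1) : ℝ)))
                ≤ ENNReal.ofReal (Real.exp lam) :=
              tsum_ofReal_le _ _ (fun s => sum_a_le hlam.le s) ha0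
            calc (∑' n : ℕ, ∑' m : ℕ, ENNReal.ofReal (lam ^ (n+1) / (Nat.factorial (n+1) : ℝ) *
                  (lam ^ (m+1) / (Nat.factorial (m+1) : ℝ))))
                = (∑' n : ℕ, ENNReal.ofReal (lam ^ (n+1) / (Nat.factorial (n+1) : ℝ))) *
                  (∑' m : ℕ, ENNReal.ofReal (lam ^ (m+1) / (Nat.factorial (m+1) : ℝ))) := by
                  simp_rw [ENNReal.ofReal_mul (ha0 _), ENNReal.tsum_mul_left]
                  rw [ENNReal.tsum_mul_right]
              _ ≤ ENNReal.ofReal (Real.exp lam) * ENNReal.ofReal (Real.exp lam) :=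
                  mul_le_mul' hS hS
              _ = ENNReal.ofReal (Real.exp lam * Real.exp lam) :=
                  (ENNReal.ofReal_mul (Real.exp_nonneg _)).symm
  calc (∫⁻ y : ℝ, ENNReal.ofReal ((Reps ε t x y) ^ 2))
      = ∫⁻ y : ℝ, ENNReal.ofReal (Real.exp (-lam)) ^ 2 * ∑' n : ℕ, ∑' m : ℕ, F n y * F m y :=
        lintegral_congr hpt
    _ = ENNReal.ofReal (Real.exp (-lam)) ^ 2 *
        ∫⁻ y : ℝ, ∑' n : ℕ, ∑' m : ℕ, F n y * F m y :=
        lintegral_const_mul' _ _ (ENNReal.pow_ne_top ENNReal.ofReal_ne_top)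
    _ = ENNReal.ofReal (Real.exp (-lam)) ^ 2 *
        ∑' n : ℕ, ∑' m : ℕ, ∫⁻ y : ℝ, F n y * F m y := by
        rw [lintegral_tsum (f := fun n y => ∑' m : ℕ, F n y * F m y) (fun n =>
          (Measurable.ennreal_tsum (fun m => (hFmeas n).mul (hFmeas m))).aemeasurable)]
        congr 1
        exact tsum_congr fun n =>
          lintegral_tsum (f := fun m y => F n y * F m y) (fun m => ((hFmeas n).mul (hFmeas m)).aemeasurable)
    _ = ENNReal.ofReal (Real.exp (-lam)) ^ 2 *
        ∑' n : ℕ, ∑' m : ℕ,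
          ENNReal.ofReal (lam ^ (n+1) / (Nat.factorial (n+1) : ℝ) *
              (lam ^ (m+1) / (Nat.factorial (m+1) : ℝ)))
            * ENNReal.ofReal (1 / Real.sqrt (2 * π * (((n:ℝ) + (m:ℝ) + 2) * ε))) := by
        congr 1
        exact tsum_congr fun n => tsum_congr fun m => hterm n m
    _ ≤ ENNReal.ofReal (Real.exp (-lam)) ^ 2 *
        (ENNReal.ofReal C0 *
          (ENNReal.ofReal (Real.exp (2 * lam)) +
           ENNReal.ofReal (Real.exp lam * Real.exp lam))) := mul_le_mul_right hDS _
    _ = ENNReal.ofReal (Real.exp (-lam) ^ 2 *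
          (C0 * (Real.exp (2 * lam) + Real.exp lam * Real.exp lam))) := by
        rw [← ENNReal.ofReal_pow (Real.exp_nonneg _),
          ← ENNReal.ofReal_add (Real.exp_nonneg _)
            (mul_nonneg (Real.exp_nonneg _) (Real.exp_nonneg _)),
          ← ENNReal.ofReal_mul hC0, ← ENNReal.ofReal_mul (by positivity)]
    _ = ENNReal.ofReal (Real.sqrt (3 / (8 * Real.pi)) * t ^ (-(1:ℝ)/2)) := by
        congr 1
        rw [hC0_def, hlam_def]
        exact final_const hε ht
end

section
/- There exist constants δ > 0 and D > 0 such that for all ε > 0, t > 0 and x ∈ ℝ with 0 < ε/t ≤ δ, one has ∫_ℝ |R_ε(t,x,y) − G(t,x,y)| dy ≤ e^{−t/ε} + D·(ε/t)^{1/3}. -/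
open MeasureTheory Real

open scoped ENNReal NNReal

/-! ### Basic facts about the heat kernel -/

lemma heatKernel_nonneg (t x y : ℝ) : 0 ≤ heatKernel t x y := by
  unfold heatKernel; split <;> positivity

lemma heatKernel_of_pos {t : ℝ} (ht : 0 < t) (x y : ℝ) :
    heatKernel t x y = (1 / Real.sqrt (2 * Real.pi * t)) * Real.exp (-(x - y) ^ 2 / (2 * t)) := by
  simp [heatKernel, ht]

lemma continuous_heatKernel (t x : ℝ) : Continuous (heatKernel t x) := by
  unfold heatKernel
  split
  · fun_prop
  · exact continuous_const

lemma heatKernel_le {s ε : ℝ} (hε : 0 < ε) (hs : ε ≤ s) (x y : ℝ) :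
    heatKernel s x y ≤ 1 / Real.sqrt (2 * Real.pi * ε) := by
  have hspos : 0 < s := lt_of_lt_of_le hε hs
  rw [heatKernel_of_pos hspos]
  calc (1 / Real.sqrt (2 * Real.pi * s)) * Real.exp (-(x - y) ^ 2 / (2 * s))
      ≤ (1 / Real.sqrt (2 * Real.pi * s)) * 1 := by
        apply mul_le_mul_of_nonneg_left _ (by positivity)
        apply Real.exp_le_one_iff.mpr
        apply div_nonpos_of_nonpos_of_nonneg (neg_nonpos.mpr (by positivity)) (by positivity)
    _ ≤ 1 / Real.sqrt (2 * Real.pi * ε) := by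
        rw [mul_one]
        apply one_div_le_one_div_of_le (by positivity)
        exact Real.sqrt_le_sqrt (by nlinarith [Real.pi_pos])

lemma integrable_heatKernel (t x : ℝ) : Integrable (heatKernel t x) := by
  rcases lt_or_ge 0 t with ht | ht
  · have h : Integrable (fun y : ℝ => Real.exp (-(1/(2*t)) * y ^ 2)) :=
      integrable_exp_neg_mul_sq (by positivity)
    have h2 : Integrable (fun y : ℝ => Real.exp (-(1/(2*t)) * (x - y) ^ 2)) := by
      have := h.comp_sub_left x
      simpa using this
    have : Integrable (fun y : ℝ =>
        (1 / Real.sqrt (2 * Real.pi * t)) * Real.exp (-(x - y) ^ 2 / (2 * t))) := by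
      have := h2.const_mul (1 / Real.sqrt (2 * Real.pi * t))
      refine this.congr (Filter.Eventually.of_forall fun y => ?_)
      ring_nf
    refine this.congr (Filter.Eventually.of_forall fun y => ?_)
    simp [heatKernel, ht]
  · have : heatKernel t x = fun _ => 0 := by
      funext y; simp [heatKernel, not_lt.mpr ht]
    rw [this]; exact integrable_zero _ _ _

lemma integral_heatKernel {t : ℝ} (ht : 0 < t) (x : ℝ) :
    ∫ y : ℝ, heatKernel t x y = 1 := by
  have h1 : ∀ y : ℝ, heatKernel t x y =
      (1 / Real.sqrt (2 * Real.pi * t)) * Real.exp (-(1/(2*t)) * (x - y) ^ 2) := by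
    intro y; rw [heatKernel_of_pos ht]; ring_nf
  simp_rw [h1]
  rw [integral_const_mul]
  have h2 : ∫ y : ℝ, Real.exp (-(1/(2*t)) * (x - y) ^ 2)
      = ∫ y : ℝ, Real.exp (-(1/(2*t)) * y ^ 2) :=
    integral_sub_left_eq_self (fun y => Real.exp (-(1/(2*t)) * y ^ 2)) volume x
  rw [h2, integral_gaussian]
  rw [one_div, inv_mul_eq_one₀ (by positivity)]
  rw [show π / (1/(2*t)) = 2 * π * t by field_simp]

/-! ### L¹ distance between two heat kernels -/

lemma integrable_gaussExp {s : ℝ} (hs : 0 < s) (x : ℝ) :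
    Integrable (fun y : ℝ => Real.exp (-(x - y) ^ 2 / (2 * s))) := by
  have h : Integrable (fun y : ℝ => Real.exp (-(1/(2*s)) * y ^ 2)) :=
    integrable_exp_neg_mul_sq (by positivity)
  have h2 := h.comp_sub_left x
  refine h2.congr (Filter.Eventually.of_forall fun y => ?_)
  ring_nf

lemma integral_gaussExp {s : ℝ} (hs : 0 < s) (x : ℝ) :
    ∫ y : ℝ, Real.exp (-(x - y) ^ 2 / (2 * s)) = Real.sqrt (2 * π * s) := by
  have h1 : ∀ y : ℝ, Real.exp (-(x - y) ^ 2 / (2 * s))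
      = Real.exp (-(1/(2*s)) * (x - y) ^ 2) := by intro y; ring_nf
  simp_rw [h1]
  rw [integral_sub_left_eq_self (fun y => Real.exp (-(1/(2*s)) * y ^ 2)) volume x,
    integral_gaussian, show π / (1/(2*s)) = 2 * π * s by field_simp]

lemma heatKernel_L1_diff_le_aux {s t : ℝ} (hs : 0 < s) (hst : s ≤ t) (x : ℝ) :
    ∫ y : ℝ, |heatKernel s x y - heatKernel t x y| ≤ 2 * (1 - Real.sqrt (s/t)) := by
  have ht : 0 < t := lt_of_lt_of_le hs hst
  set cs := 1 / Real.sqrt (2 * π * s) with hcs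
  set ct := 1 / Real.sqrt (2 * π * t) with hct
  have hcspos : 0 < cs := by rw [hcs]; positivity
  have hctpos : 0 < ct := by rw [hct]; positivity
  have hcle : ct ≤ cs := by
    rw [hcs, hct]
    exact one_div_le_one_div_of_le (by positivity) (Real.sqrt_le_sqrt (by nlinarith [Real.pi_pos]))
  set Es := fun y : ℝ => Real.exp (-(x - y) ^ 2 / (2 * s)) with hEs
  set Et := fun y : ℝ => Real.exp (-(x - y) ^ 2 / (2 * t)) with hEt
  have hEle : ∀ y, Es y ≤ Et y := by
    intro y
    apply Real.exp_le_exp.mpr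
    rw [div_le_div_iff₀ (by positivity) (by positivity)]
    nlinarith [sq_nonneg (x - y)]
  have hbound : ∀ y : ℝ, |heatKernel s x y - heatKernel t x y|
      ≤ (cs - ct) * Es y + ct * (Et y - Es y) := by
    intro y
    rw [heatKernel_of_pos hs, heatKernel_of_pos ht]
    show |cs * Es y - ct * Et y| ≤ (cs - ct) * Es y + ct * (Et y - Es y)
    have h1 : cs * Es y - ct * Et y = (cs - ct) * Es y - ct * (Et y - Es y) := by ring
    rw [h1]
    refine (abs_sub _ _).trans ?_
    have e1 : 0 ≤ Es y := le_of_lt (Real.exp_pos _)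
    rw [abs_of_nonneg (by nlinarith), abs_of_nonneg (by nlinarith [hEle y])]
  have hint1 : Integrable Es := integrable_gaussExp hs x
  have hint2 : Integrable Et := integrable_gaussExp ht x
  have hint3 : Integrable (fun y : ℝ => Et y - Es y) := hint2.sub hint1
  have hrhs : Integrable (fun y => (cs - ct) * Es y + ct * (Et y - Es y)) :=
    ((hint1.const_mul _).add (hint3.const_mul _))
  have hlhs : Integrable (fun y => |heatKernel s x y - heatKernel t x y|) :=
    ((integrable_heatKernel s x).sub (integrable_heatKernel t x)).abs
  calc ∫ y : ℝ, |heatKernel s x y - heatKernel t x y|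
      ≤ ∫ y : ℝ, ((cs - ct) * Es y + ct * (Et y - Es y)) :=
        integral_mono hlhs hrhs hbound
    _ = (cs - ct) * Real.sqrt (2*π*s) + ct * (Real.sqrt (2*π*t) - Real.sqrt (2*π*s)) := by
        rw [integral_add (hint1.const_mul _) (hint3.const_mul _),
          integral_const_mul, integral_const_mul, integral_sub hint2 hint1,
          integral_gaussExp hs, integral_gaussExp ht]
    _ ≤ 2 * (1 - Real.sqrt (s/t)) := by
        have h1 : cs * Real.sqrt (2*π*s) = 1 := by
          rw [hcs]; field_simp
        have h2 : ct * Real.sqrt (2*π*t) = 1 := by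
          rw [hct]; field_simp
        have h3 : ct * Real.sqrt (2*π*s) = Real.sqrt (s/t) := by
          rw [hct, one_div, inv_mul_eq_div, ← Real.sqrt_div' _ (by positivity),
            show 2*π*s / (2*π*t) = s/t by field_simp]
        nlinarith

lemma heatKernel_L1_diff_le_two {s t : ℝ} (hs : 0 < s) (ht : 0 < t) (x : ℝ) :
    ∫ y : ℝ, |heatKernel s x y - heatKernel t x y| ≤ 2 := by
  have hb : ∀ y : ℝ, |heatKernel s x y - heatKernel t x y|
      ≤ heatKernel s x y + heatKernel t x y := by
    intro y
    refine (abs_sub _ _).trans ?_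
    rw [abs_of_nonneg (heatKernel_nonneg s x y), abs_of_nonneg (heatKernel_nonneg t x y)]
  calc ∫ y : ℝ, |heatKernel s x y - heatKernel t x y|
      ≤ ∫ y : ℝ, (heatKernel s x y + heatKernel t x y) :=
        integral_mono (((integrable_heatKernel s x).sub (integrable_heatKernel t x)).abs)
          ((integrable_heatKernel s x).add (integrable_heatKernel t x)) hb
    _ = 2 := by
        rw [integral_add (integrable_heatKernel s x) (integrable_heatKernel t x),
          integral_heatKernel hs x, integral_heatKernel ht x]
        norm_num

lemma heatKernel_L1_diff {s t : ℝ} (hs : 0 < s) (ht : 0 < t) (x : ℝ) :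
    ∫ y : ℝ, |heatKernel s x y - heatKernel t x y| ≤ min 2 (2 * |s - t| / t) := by
  refine le_min (heatKernel_L1_diff_le_two hs ht x) ?_
  rcases le_or_gt s t with h | h
  · refine (heatKernel_L1_diff_le_aux hs h x).trans ?_
    have h2 : s/t ≤ 1 := (div_le_one ht).mpr h
    have h3 : (0:ℝ) ≤ s/t := by positivity
    have h1 : s/t ≤ Real.sqrt (s/t) := by
      nlinarith [Real.sq_sqrt h3, Real.sqrt_nonneg (s/t)]
    have h4 : |s - t| = t - s := by rw [abs_of_nonpos (by linarith)]; ring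
    rw [h4]
    have h5 : 2 * (t - s) / t = 2 * (1 - s/t) := by field_simp
    rw [h5]
    linarith
  · have hcomm : (fun y : ℝ => |heatKernel s x y - heatKernel t x y|)
        = fun y : ℝ => |heatKernel t x y - heatKernel s x y| := by
      funext y; rw [abs_sub_comm]
    rw [hcomm]
    refine (heatKernel_L1_diff_le_aux ht h.le x).trans ?_
    have h2 : t/s ≤ 1 := (div_le_one hs).mpr h.le
    have h3 : (0:ℝ) ≤ t/s := by positivity
    have h1 : t/s ≤ Real.sqrt (t/s) := by
      nlinarith [Real.sq_sqrt h3, Real.sqrt_nonneg (t/s)]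
    have h4 : |s - t| = s - t := abs_of_nonneg (by linarith)
    rw [h4]
    have h5 : 1 - t/s = (s - t)/s := by field_simp
    have h6 : (s - t)/s ≤ (s - t)/t := by
      apply div_le_div_of_nonneg_left (by linarith) ht h.le
    have h7 : 2 * (s - t) / t = 2 * ((s - t)/t) := by ring
    rw [h7]
    linarith

/-! ### Poisson moments -/

lemma tsum_pow_div_factorial (l : ℝ) : ∑' n : ℕ, l ^ n / (Nat.factorial n : ℝ) = Real.exp l := by
  rw [Real.exp_eq_exp_ℝ, NormedSpace.exp_eq_tsum_div]

lemma summable_pdf (l : ℝ) : Summable (fun n : ℕ => l ^ n / (Nat.factorial n : ℝ)) :=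
  Real.summable_pow_div_factorial l

lemma shift1 (l : ℝ) : (fun n : ℕ => ((n:ℝ)+1) * l ^ (n+1) / (Nat.factorial (n+1) : ℝ))
    = fun n : ℕ => l * (l ^ n / (Nat.factorial n : ℝ)) := by
  funext n
  rw [Nat.factorial_succ]
  push_cast
  have h : ((n:ℝ)+1) ≠ 0 := by positivity
  field_simp
  ring

lemma summable_n_pdf (l : ℝ) : Summable (fun n : ℕ => (n:ℝ) * l ^ n / (Nat.factorial n : ℝ)) := by
  rw [← summable_nat_add_iff 1]
  push_cast
  rw [shift1 l]
  exact (summable_pdf l).mul_left l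

lemma tsum_n_pdf (l : ℝ) : ∑' n : ℕ, (n:ℝ) * l ^ n / (Nat.factorial n : ℝ) = l * Real.exp l := by
  rw [Summable.tsum_eq_zero_add (summable_n_pdf l)]
  push_cast
  rw [shift1 l, tsum_mul_left, tsum_pow_div_factorial]
  simp

lemma shift2 (l : ℝ) :
    (fun n : ℕ => ((n:ℝ)+2) * (((n:ℝ)+2)-1) * l ^ (n+2) / (Nat.factorial (n+2) : ℝ))
    = fun n : ℕ => l^2 * (l ^ n / (Nat.factorial n : ℝ)) := by
  funext n
  rw [Nat.factorial_succ, Nat.factorial_succ]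
  push_cast
  have h1 : ((n:ℝ)+1) ≠ 0 := by positivity
  have h2 : ((n:ℝ)+1+1) ≠ 0 := by positivity
  field_simp
  ring

lemma summable_nn_pdf (l : ℝ) :
    Summable (fun n : ℕ => (n:ℝ) * ((n:ℝ)-1) * l ^ n / (Nat.factorial n : ℝ)) := by
  rw [← summable_nat_add_iff 2]
  refine ((summable_pdf l).mul_left (l^2)).congr fun n => ?_
  have h2 := congrFun (shift2 l) n
  push_cast at h2 ⊢
  linarith [h2]

lemma tsum_nn_pdf (l : ℝ) :
    ∑' n : ℕ, (n:ℝ) * ((n:ℝ)-1) * l ^ n / (Nat.factorial n : ℝ) = l^2 * Real.exp l := by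
  rw [Summable.tsum_eq_zero_add (summable_nn_pdf l)]
  rw [Summable.tsum_eq_zero_add ((summable_nat_add_iff 1).mpr (summable_nn_pdf l))]
  push_cast
  have h : (fun n : ℕ => ((n:ℝ)+1+1) * (((n:ℝ)+1+1)-1) * l ^ (n+1+1) / (Nat.factorial (n+1+1) : ℝ))
      = fun n : ℕ => l^2 * (l ^ n / (Nat.factorial n : ℝ)) := by
    have := shift2 l
    funext n
    have h2 := congrFun this n
    push_cast at h2 ⊢
    convert h2 using 2 <;> ring
  rw [h, tsum_mul_left, tsum_pow_div_factorial]
  norm_num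

lemma summable_var_pdf (l : ℝ) :
    Summable (fun n : ℕ => (l ^ n / (Nat.factorial n : ℝ)) * ((n:ℝ) - l)^2) := by
  have h : (fun n : ℕ => (l ^ n / (Nat.factorial n : ℝ)) * ((n:ℝ) - l)^2)
      = fun n : ℕ => (n:ℝ) * ((n:ℝ)-1) * l ^ n / (Nat.factorial n : ℝ)
        + ((1 - 2*l) * ((n:ℝ) * l ^ n / (Nat.factorial n : ℝ))
        + l^2 * (l ^ n / (Nat.factorial n : ℝ))) := by
    funext n; field_simp; ring
  rw [h]
  exact (summable_nn_pdf l).add (((summable_n_pdf l).mul_left _).add ((summable_pdf l).mul_left _))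

lemma tsum_var_pdf (l : ℝ) :
    ∑' n : ℕ, (l ^ n / (Nat.factorial n : ℝ)) * ((n:ℝ) - l)^2 = l * Real.exp l := by
  have h : (fun n : ℕ => (l ^ n / (Nat.factorial n : ℝ)) * ((n:ℝ) - l)^2)
      = fun n : ℕ => (n:ℝ) * ((n:ℝ)-1) * l ^ n / (Nat.factorial n : ℝ)
        + ((1 - 2*l) * ((n:ℝ) * l ^ n / (Nat.factorial n : ℝ))
        + l^2 * (l ^ n / (Nat.factorial n : ℝ))) := by
    funext n; field_simp; ring
  rw [h, Summable.tsum_add (summable_nn_pdf l)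
      (((summable_n_pdf l).mul_left _).add ((summable_pdf l).mul_left _)),
    Summable.tsum_add ((summable_n_pdf l).mul_left _) ((summable_pdf l).mul_left _),
    tsum_mul_left, tsum_mul_left, tsum_nn_pdf, tsum_n_pdf, tsum_pow_div_factorial]
  ring

/-! ### Integrability of nonnegative series -/

lemma aux_tsum_integrable {F : ℕ → ℝ → ℝ} (hm : ∀ n, Measurable (F n))
    (h0 : ∀ n y, 0 ≤ F n y) (hint : ∀ n, Integrable (F n))
    (hptsum : ∀ y, Summable fun n => F n y)
    (hsum : Summable fun n => ∫ y, F n y) :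
    Integrable (fun y => ∑' n, F n y) ∧ (∫ y, ∑' n, F n y) = ∑' n, ∫ y, F n y := by
  have hofReal : ∀ n, (fun y => (‖F n y‖₊ : ℝ≥0∞)) = fun y => ENNReal.ofReal (F n y) := by
    intro n; funext y; rw [← Real.enorm_eq_ofReal (h0 n y), enorm_eq_nnnorm]
  have h1 : ∀ n, ∫⁻ y, (‖F n y‖₊ : ℝ≥0∞) = ENNReal.ofReal (∫ y, F n y) := by
    intro n
    rw [ofReal_integral_eq_lintegral_ofReal (hint n) (Filter.Eventually.of_forall (h0 n)),
      hofReal n]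
  have key : (∑' n, ∫⁻ y, (‖F n y‖₊ : ℝ≥0∞)) ≠ ⊤ := by
    simp_rw [h1]
    rw [← ENNReal.ofReal_tsum_of_nonneg (fun n => integral_nonneg (h0 n)) hsum]
    exact ENNReal.ofReal_ne_top
  have heq : (fun y => ∑' n, F n y) = fun y => (∑' n, ENNReal.ofReal (F n y)).toReal := by
    funext y
    rw [← ENNReal.ofReal_tsum_of_nonneg (fun n => h0 n y) (hptsum y), ENNReal.toReal_ofReal
      (tsum_nonneg (fun n => h0 n y))]
  have hmeas : Measurable (fun y => ∑' n, F n y) := by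
    rw [heq]
    exact (Measurable.ennreal_tsum (fun n => (hm n).ennreal_ofReal)).ennreal_toReal
  refine ⟨⟨hmeas.aestronglyMeasurable, ?_⟩,
    integral_tsum (fun n => (hm n).aestronglyMeasurable) key⟩
  rw [HasFiniteIntegral]
  have h2 : ∀ y, ‖∑' n, F n y‖ₑ = ∑' n, ENNReal.ofReal (F n y) := by
    intro y
    rw [Real.enorm_eq_ofReal (tsum_nonneg (fun n => h0 n y)),
      ENNReal.ofReal_tsum_of_nonneg (fun n => h0 n y) (hptsum y)]
  simp_rw [h2]
  rw [lintegral_tsum (fun n => ((hm n).ennreal_ofReal).aemeasurable)]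
  simp_rw [← hofReal]
  exact lt_of_le_of_ne le_top key

/-! ### A scalar inequality -/

lemma min_bound {l w : ℝ} (hl : 0 < l) :
    min 2 (2 * |w| / l) ≤ 2 * (w ^ 2 / l ^ 2 * l ^ ((2:ℝ)/3)) + 2 * l ^ (-(1:ℝ)/3) := by
  have h0 : (0:ℝ) ≤ 2 * (w ^ 2 / l ^ 2 * l ^ ((2:ℝ)/3)) := by positivity
  rcases le_or_gt (|w| / l) (l ^ (-(1:ℝ)/3)) with h | h
  · calc min 2 (2 * |w| / l) ≤ 2 * |w| / l := min_le_right _ _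
      _ = 2 * (|w| / l) := by ring
      _ ≤ 2 * l ^ (-(1:ℝ)/3) := by linarith
      _ ≤ _ := by linarith
  · have h1 : l ^ (-(1:ℝ)/3) * l ^ (-(1:ℝ)/3) = l ^ (-(2:ℝ)/3) := by
      rw [← Real.rpow_add hl]; norm_num
    have h2 : l ^ (-(2:ℝ)/3) * l ^ ((2:ℝ)/3) = 1 := by
      rw [← Real.rpow_add hl]; norm_num
    have h3 : (0:ℝ) < l ^ (-(1:ℝ)/3) := Real.rpow_pos_of_pos hl _
    have h4 : (0:ℝ) < l ^ ((2:ℝ)/3) := Real.rpow_pos_of_pos hl _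
    have h5 : l ^ (-(2:ℝ)/3) < (|w| / l) * (|w| / l) := by nlinarith
    have h6 : (|w|/l) * (|w|/l) = w ^ 2 / l ^ 2 := by
      rw [div_mul_div_comm, ← abs_mul, ← pow_two, ← pow_two, abs_of_nonneg (sq_nonneg w)]
    have h8 : l ^ (-(2:ℝ)/3) < w ^ 2 / l ^ 2 := by rw [← h6]; exact h5
    have h9 : (1:ℝ) < w ^ 2 / l ^ 2 * l ^ ((2:ℝ)/3) :=
      h2 ▸ mul_lt_mul_of_pos_right h8 h4
    have h7 : (2:ℝ) ≤ 2 * (w ^ 2 / l ^ 2 * l ^ ((2:ℝ)/3)) := by nlinarith [h9]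
    calc min 2 (2 * |w| / l) ≤ 2 := min_le_left _ _
      _ ≤ _ := by linarith

/-! ### Main theorem -/

/-- There exist `δ, D > 0` such that for all `ε > 0`, `t > 0` and `x ∈ ℝ` with
`ε/t ≤ δ` one has `∫_ℝ |R_ε(t,x,y) − G(t,x,y)| dy ≤ e^{-t/ε} + D (ε/t)^{1/3}`. -/
theorem Reps_sub_heatKernel_L1_bound :
    ∃ δ > (0 : ℝ), ∃ D > (0 : ℝ), ∀ ε > (0 : ℝ), ∀ t > (0 : ℝ), ∀ x : ℝ,
      ε / t ≤ δ →
      (∫ y : ℝ, |Reps ε t x y - heatKernel t x y|) ≤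
        Real.exp (-t / ε) + D * (ε / t) ^ ((1:ℝ)/3) := by
  refine ⟨1, one_pos, 4, by norm_num, ?_⟩
  intro ε hε t ht x _
  set l := t / ε with hldef
  have hl : 0 < l := div_pos ht hε
  have hεt : ε / t = l⁻¹ := by rw [hldef, inv_div]
  have hneg : -t / ε = -l := by rw [hldef, neg_div]
  have hexp : Real.exp (-l) * Real.exp l = 1 := by rw [← Real.exp_add]; simp
  set q : ℕ → ℝ := fun n => l ^ (n+1) / (Nat.factorial (n+1) : ℝ) with hqdef
  have hq0 : ∀ n, 0 ≤ q n := fun n => by rw [hqdef]; positivity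
  have hq_sum : Summable q := (summable_nat_add_iff 1).mpr (summable_pdf l)
  have hq_tsum : ∑' n, q n = Real.exp l - 1 := by
    have h := Summable.tsum_eq_zero_add (summable_pdf l)
    rw [tsum_pow_div_factorial l] at h
    have h0 : l ^ 0 / ((Nat.factorial 0 : ℕ) : ℝ) = 1 := by norm_num
    have h2 : ∑' n : ℕ, l ^ (n+1) / (Nat.factorial (n+1) : ℝ)
        = ∑' n : ℕ, q n := by rw [hqdef]
    rw [h0, h2] at h
    linarith only [h]
  set Gt : ℝ → ℝ := heatKernel t x with hGtdef
  set Gn : ℕ → ℝ → ℝ := fun n => heatKernel (((n:ℝ)+1)*ε) x with hGndef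
  have hsn : ∀ n : ℕ, 0 < ((n:ℝ)+1)*ε := fun n => by positivity
  have hεsn : ∀ n : ℕ, ε ≤ ((n:ℝ)+1)*ε := fun n => by
    nlinarith [Nat.cast_nonneg (α := ℝ) n]
  set H : ℕ → ℝ → ℝ := fun n y => q n * |Gn n y - Gt y| with hHdef
  have hH0 : ∀ n y, 0 ≤ H n y := fun n y => mul_nonneg (hq0 n) (abs_nonneg _)
  have hHmeas : ∀ n, Measurable (H n) := fun n =>
    (((continuous_heatKernel _ x).sub (continuous_heatKernel t x)).abs.measurable).const_mul _
  have hHint : ∀ n, Integrable (H n) := fun n =>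
    (((integrable_heatKernel _ x).sub (integrable_heatKernel t x)).abs).const_mul _
  have hCt : ∀ y, Gt y ≤ 1 / Real.sqrt (2*π*t) := fun y => heatKernel_le ht le_rfl x y
  have hCε : ∀ n y, Gn n y ≤ 1 / Real.sqrt (2*π*ε) := fun n y =>
    heatKernel_le hε (hεsn n) x y
  have hptsum : ∀ y, Summable fun n => H n y := by
    intro y
    refine Summable.of_nonneg_of_le (fun n => hH0 n y) (fun n => ?_)
      (hq_sum.mul_right (1 / Real.sqrt (2*π*ε) + 1 / Real.sqrt (2*π*t)))
    refine mul_le_mul_of_nonneg_left ?_ (hq0 n)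
    refine (abs_sub _ _).trans ?_
    rw [abs_of_nonneg (heatKernel_nonneg _ x y), abs_of_nonneg (heatKernel_nonneg t x y)]
    exact add_le_add (hCε n y) (hCt y)
  have hIntH : ∀ n, ∫ y, H n y = q n * ∫ y, |Gn n y - Gt y| := fun n =>
    integral_const_mul _ _
  have hIntH_le2 : ∀ n, ∫ y, H n y ≤ 2 * q n := by
    intro n
    rw [hIntH n]
    calc q n * ∫ y, |Gn n y - Gt y| ≤ q n * 2 :=
          mul_le_mul_of_nonneg_left (heatKernel_L1_diff_le_two (hsn n) ht x) (hq0 n)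
      _ = 2 * q n := mul_comm _ _
  have hHsum_int : Summable (fun n => ∫ y, H n y) :=
    Summable.of_nonneg_of_le (fun n => integral_nonneg (fun y => hH0 n y)) hIntH_le2
      (hq_sum.mul_left 2)
  obtain ⟨hint_tsum, hsum_eq⟩ :=
    aux_tsum_integrable hHmeas hH0 hHint hptsum hHsum_int
  -- pointwise bound
  have hpt : ∀ y, |Reps ε t x y - Gt y|
      ≤ Real.exp (-l) * (∑' n, H n y) + Real.exp (-l) * Gt y := by
    intro y
    have hs_g : Summable (fun n => q n * Gn n y) := by
      refine Summable.of_nonneg_of_le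
        (fun n => mul_nonneg (hq0 n) (heatKernel_nonneg _ x y))
        (fun n => mul_le_mul_of_nonneg_left (hCε n y) (hq0 n))
        (hq_sum.mul_right (1 / Real.sqrt (2*π*ε)))
    have hs_t : Summable (fun n => q n * Gt y) := hq_sum.mul_right _
    have hRdef : Reps ε t x y = Real.exp (-t/ε) * ∑' n, q n * Gn n y := by
      simp only [Reps, hqdef, hGndef, ← hldef]
    have key : Reps ε t x y - Gt y
        = Real.exp (-l) * (∑' n, (q n * Gn n y - q n * Gt y)) - Real.exp (-l) * Gt y := by
      rw [hRdef, hneg, Summable.tsum_sub hs_g hs_t, tsum_mul_right, hq_tsum]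
      linear_combination (Gt y) * hexp
    rw [key]
    refine (abs_sub _ _).trans ?_
    rw [abs_mul, abs_mul, abs_of_nonneg (le_of_lt (Real.exp_pos _)),
      abs_of_nonneg (heatKernel_nonneg t x y)]
    refine add_le_add (mul_le_mul_of_nonneg_left ?_ (le_of_lt (Real.exp_pos _))) le_rfl
    have hsummable_abs : Summable (fun n => ‖q n * Gn n y - q n * Gt y‖) := by
      refine (hptsum y).congr fun n => ?_
      rw [hHdef]
      simp only [Real.norm_eq_abs, ← mul_sub, abs_mul, abs_of_nonneg (hq0 n)]
    refine (norm_tsum_le_tsum_norm hsummable_abs).trans (le_of_eq (tsum_congr fun n => ?_))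
    rw [Real.norm_eq_abs, ← mul_sub, abs_mul, abs_of_nonneg (hq0 n)]
  -- integrate the pointwise bound
  have step1 : (∫ y : ℝ, |Reps ε t x y - Gt y|)
      ≤ Real.exp (-l) * (∑' n, ∫ y, H n y) + Real.exp (-l) := by
    have hg_int : Integrable (fun y =>
        Real.exp (-l) * (∑' n, H n y) + Real.exp (-l) * Gt y) :=
      (hint_tsum.const_mul _).add ((integrable_heatKernel t x).const_mul _)
    calc (∫ y : ℝ, |Reps ε t x y - Gt y|)
        ≤ ∫ y : ℝ, (Real.exp (-l) * (∑' n, H n y) + Real.exp (-l) * Gt y) :=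
          integral_mono_of_nonneg (Filter.Eventually.of_forall fun y => abs_nonneg _)
            hg_int (Filter.Eventually.of_forall hpt)
      _ = Real.exp (-l) * (∫ y, ∑' n, H n y) + Real.exp (-l) * ∫ y, Gt y := by
          rw [integral_add (hint_tsum.const_mul _) ((integrable_heatKernel t x).const_mul _),
            integral_const_mul, integral_const_mul]
      _ = Real.exp (-l) * (∑' n, ∫ y, H n y) + Real.exp (-l) := by
          rw [hsum_eq, hGtdef, integral_heatKernel ht x, mul_one]
  -- bound each integral in the series
  have hIn : ∀ n : ℕ, (∫ y, H n y)
      ≤ (2 * l^((2:ℝ)/3) / l^2) * (q n * (((n:ℝ)+1) - l)^2)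
        + (2 * l^(-(1:ℝ)/3)) * q n := by
    intro n
    have hw : |((n:ℝ)+1)*ε - t| / t = |(((n:ℝ)+1) - l)| / l := by
      have htl : t = l * ε := by rw [hldef]; field_simp
      rw [show ((n:ℝ)+1)*ε - t = (((n:ℝ)+1) - l)*ε by rw [htl]; ring,
        abs_mul, abs_of_pos hε, htl]
      rw [mul_comm |(((n:ℝ)+1) - l)| ε, mul_comm l ε, mul_div_mul_left _ _ (ne_of_gt hε)]
    have hmin := heatKernel_L1_diff (hsn n) ht x
    have h2 : min 2 (2 * |((n:ℝ)+1)*ε - t| / t)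
        ≤ 2 * ((((n:ℝ)+1) - l) ^ 2 / l ^ 2 * l ^ ((2:ℝ)/3)) + 2 * l ^ (-(1:ℝ)/3) := by
      have := min_bound (w := ((n:ℝ)+1) - l) hl
      rw [show 2 * |((n:ℝ)+1)*ε - t| / t = 2 * (|((n:ℝ)+1)*ε - t| / t) by ring, hw,
        show 2 * (|(((n:ℝ)+1) - l)| / l) = 2 * |(((n:ℝ)+1) - l)| / l by ring]
      exact this
    rw [hIntH n]
    calc q n * ∫ y, |Gn n y - Gt y|
        ≤ q n * (2 * ((((n:ℝ)+1) - l) ^ 2 / l ^ 2 * l ^ ((2:ℝ)/3)) + 2 * l ^ (-(1:ℝ)/3)) :=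
          mul_le_mul_of_nonneg_left (hmin.trans h2) (hq0 n)
      _ = (2 * l^((2:ℝ)/3) / l^2) * (q n * (((n:ℝ)+1) - l)^2)
          + (2 * l^(-(1:ℝ)/3)) * q n := by ring
  -- variance sum bound
  have hsVar : Summable (fun n : ℕ => q n * (((n:ℝ)+1) - l)^2) := by
    refine ((summable_nat_add_iff 1).mpr (summable_var_pdf l)).congr fun n => ?_
    rw [hqdef]
    push_cast
    ring
  have hVar : ∑' n, q n * (((n:ℝ)+1) - l)^2 ≤ l * Real.exp l := by
    have h := Summable.tsum_eq_zero_add (summable_var_pdf l)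
    rw [tsum_var_pdf l] at h
    have h2 : ∑' n : ℕ, q n * (((n:ℝ)+1) - l)^2
        = ∑' n : ℕ, (l ^ (n+1) / (Nat.factorial (n+1) : ℝ)) * (((n:ℕ)+1:ℝ) - l)^2 := by
      refine tsum_congr fun n => ?_
      rw [hqdef]
    have h3 : ∑' n : ℕ, (l ^ (n+1) / (Nat.factorial (n+1) : ℝ)) * (((n:ℕ)+1:ℝ) - l)^2
        = ∑' n : ℕ, (l ^ (n+1) / (Nat.factorial (n+1) : ℝ)) * (((n+1 : ℕ):ℝ) - l)^2 := by
      refine tsum_congr fun n => ?_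
      push_cast
      ring
    have h0 : (l ^ 0 / ((Nat.factorial 0 : ℕ) : ℝ)) * (((0:ℕ):ℝ) - l)^2 = l^2 := by
      norm_num
    rw [h2, h3]
    have h4 : (0:ℝ) ≤ l^2 := sq_nonneg l
    rw [h0] at h
    linarith only [h, h4]
  -- sum the series bound
  have hseries : ∑' n, ∫ y, H n y
      ≤ (2 * l^((2:ℝ)/3) / l^2) * (l * Real.exp l)
        + (2 * l^(-(1:ℝ)/3)) * (Real.exp l - 1) := by
    have hRHSsum : Summable (fun n : ℕ =>
        (2 * l^((2:ℝ)/3) / l^2) * (q n * (((n:ℝ)+1) - l)^2) + (2 * l^(-(1:ℝ)/3)) * q n) :=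
      (hsVar.mul_left _).add (hq_sum.mul_left _)
    calc ∑' n, ∫ y, H n y
        ≤ ∑' n, ((2 * l^((2:ℝ)/3) / l^2) * (q n * (((n:ℝ)+1) - l)^2)
            + (2 * l^(-(1:ℝ)/3)) * q n) := Summable.tsum_le_tsum hIn hHsum_int hRHSsum
      _ = (2 * l^((2:ℝ)/3) / l^2) * (∑' n, q n * (((n:ℝ)+1) - l)^2)
            + (2 * l^(-(1:ℝ)/3)) * (∑' n, q n) := by
          rw [Summable.tsum_add (hsVar.mul_left _) (hq_sum.mul_left _), tsum_mul_left, tsum_mul_left]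
      _ ≤ _ := by
          refine add_le_add (mul_le_mul_of_nonneg_left hVar (by positivity)) (le_of_eq ?_)
          rw [hq_tsum]
  -- final arithmetic
  have h23 : l ^ ((2:ℝ)/3) / l^2 * l = l ^ (-(1:ℝ)/3) := by
    rw [← Real.rpow_natCast l 2]
    nth_rewrite 3 [← Real.rpow_one l]
    rw [← Real.rpow_sub hl, ← Real.rpow_add hl]
    norm_num
  have hpow : (ε/t) ^ ((1:ℝ)/3) = l ^ (-(1:ℝ)/3) := by
    rw [hεt, ← Real.rpow_neg_one l, ← Real.rpow_mul hl.le]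
    norm_num
  have hrpos : (0:ℝ) < l ^ (-(1:ℝ)/3) := Real.rpow_pos_of_pos hl _
  have hexp_pos : (0:ℝ) < Real.exp (-l) := Real.exp_pos _
  have hA : Real.exp (-l) * ((2 * l^((2:ℝ)/3) / l^2) * (l * Real.exp l))
      = 2 * l ^ (-(1:ℝ)/3) := by
    rw [show Real.exp (-l) * ((2 * l^((2:ℝ)/3) / l^2) * (l * Real.exp l))
        = 2 * (l^((2:ℝ)/3) / l^2 * l) * (Real.exp (-l) * Real.exp l) by ring, hexp, h23]
    ring
  have hB : Real.exp (-l) * ((2 * l^(-(1:ℝ)/3)) * (Real.exp l - 1))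
      = 2 * l^(-(1:ℝ)/3) * (1 - Real.exp (-l)) := by
    rw [show Real.exp (-l) * ((2 * l^(-(1:ℝ)/3)) * (Real.exp l - 1))
        = 2 * l^(-(1:ℝ)/3) * (Real.exp (-l) * Real.exp l) - 2 * l^(-(1:ℝ)/3) * Real.exp (-l)
        by ring, hexp]
    ring
  have hfinal : Real.exp (-l) * (∑' n, ∫ y, H n y) + Real.exp (-l)
      ≤ Real.exp (-l) + 4 * l ^ (-(1:ℝ)/3) := by
    have h5 : Real.exp (-l) * (∑' n, ∫ y, H n y)
        ≤ Real.exp (-l) * ((2 * l^((2:ℝ)/3) / l^2) * (l * Real.exp l)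
          + (2 * l^(-(1:ℝ)/3)) * (Real.exp l - 1)) :=
      mul_le_mul_of_nonneg_left hseries hexp_pos.le
    rw [mul_add, hA, hB] at h5
    have h6 : (0:ℝ) ≤ 2 * l^(-(1:ℝ)/3) * Real.exp (-l) := by positivity
    have h7 : 2 * l^(-(1:ℝ)/3) * (1 - Real.exp (-l))
        = 2 * l^(-(1:ℝ)/3) - 2 * l^(-(1:ℝ)/3) * Real.exp (-l) := by ring
    linarith only [h5, h6, h7]
  rw [hneg, hpow]
  exact (step1.trans hfinal)
end

section
/- There exists a constant C > 0 such that for all 0 ≤ r ≤ t and all y, z ∈ ℝ, ∫₀ᵗ ∫_ℝ (G(t−s,x,y) − G(r−s,x,z))² dx ds ≤ C·(√(t−r) + |y−z|). -/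
open MeasureTheory Real Set

lemma hk_mul_eq {a b : ℝ} (ha : 0 < a) (hb : 0 < b) (y z x : ℝ) :
    heatKernel a x y * heatKernel b x z
      = ((1 / Real.sqrt (2 * π * a)) * (1 / Real.sqrt (2 * π * b))
          * Real.exp (-(y - z) ^ 2 / (2 * (a + b))))
        * Real.exp (-((a + b) / (2 * a * b)) * (x - (b * y + a * z) / (a + b)) ^ 2) := by
  have hab : a + b ≠ 0 := by positivity
  have hE : (-(x - y) ^ 2 / (2 * a)) + (-(x - z) ^ 2 / (2 * b))
      = (-(y - z) ^ 2 / (2 * (a + b))) + (-((a + b) / (2 * a * b)) * (x - (b * y + a * z) / (a + b)) ^ 2) := by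
    field_simp
    ring
  rw [heatKernel, heatKernel, if_pos ha, if_pos hb]
  rw [mul_mul_mul_comm, ← Real.exp_add, hE, Real.exp_add]
  ring

lemma hk_mul_integrable {a b : ℝ} (ha : 0 < a) (hb : 0 < b) (y z : ℝ) :
    Integrable (fun x => heatKernel a x y * heatKernel b x z) := by
  have hk : 0 < (a + b) / (2 * a * b) := by positivity
  have : Integrable (fun x : ℝ =>
      ((1 / Real.sqrt (2 * π * a)) * (1 / Real.sqrt (2 * π * b))
          * Real.exp (-(y - z) ^ 2 / (2 * (a + b))))
        * Real.exp (-((a + b) / (2 * a * b)) * (x - (b * y + a * z) / (a + b)) ^ 2)) := by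
    exact ((integrable_exp_neg_mul_sq hk).comp_sub_right _).const_mul _
  exact this.congr (by filter_upwards with x using (hk_mul_eq ha hb y z x).symm)

lemma hk_mul_integral {a b : ℝ} (ha : 0 < a) (hb : 0 < b) (y z : ℝ) :
    ∫ x : ℝ, heatKernel a x y * heatKernel b x z
      = (1 / Real.sqrt (2 * π * (a + b))) * Real.exp (-(y - z) ^ 2 / (2 * (a + b))) := by
  have hk : 0 < (a + b) / (2 * a * b) := by positivity
  have h1 : ∫ x : ℝ, heatKernel a x y * heatKernel b x z
      = ((1 / Real.sqrt (2 * π * a)) * (1 / Real.sqrt (2 * π * b))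
          * Real.exp (-(y - z) ^ 2 / (2 * (a + b))))
        * ∫ x : ℝ, Real.exp (-((a + b) / (2 * a * b)) * (x - (b * y + a * z) / (a + b)) ^ 2) := by
    rw [← integral_const_mul]
    exact integral_congr_ae (by filter_upwards with x using hk_mul_eq ha hb y z x)
  rw [h1, integral_sub_right_eq_self (fun u => Real.exp (-((a + b) / (2 * a * b)) * u ^ 2)),
    integral_gaussian]
  have hC : (1 / Real.sqrt (2 * π * a)) * (1 / Real.sqrt (2 * π * b))
      * Real.sqrt (π / ((a + b) / (2 * a * b))) = 1 / Real.sqrt (2 * π * (a + b)) := by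
    rw [div_mul_div_comm, one_mul, ← Real.sqrt_mul (by positivity), mul_comm, one_div,
      ← Real.sqrt_inv, ← Real.sqrt_mul (by positivity)]
    rw [show (π / ((a + b) / (2 * a * b))) * (2 * π * a * (2 * π * b))⁻¹
        = (2 * π * (a + b))⁻¹ by field_simp, Real.sqrt_inv, one_div]
  rw [mul_comm _ (Real.sqrt _), ← mul_assoc, mul_comm (Real.sqrt _), hC]

lemma inner_eq_pos {a b : ℝ} (ha : 0 < a) (hb : 0 < b) (y z : ℝ) :
    ∫ x : ℝ, (heatKernel a x y - heatKernel b x z) ^ 2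
      = 1 / Real.sqrt (4 * π * a) + 1 / Real.sqrt (4 * π * b)
        - 2 * ((1 / Real.sqrt (2 * π * (a + b))) * Real.exp (-(y - z) ^ 2 / (2 * (a + b)))) := by
  have hE : ∀ x : ℝ, (heatKernel a x y - heatKernel b x z) ^ 2
      = heatKernel a x y * heatKernel a x y + heatKernel b x z * heatKernel b x z
        - 2 * (heatKernel a x y * heatKernel b x z) := by intro x; ring
  simp_rw [hE]
  have hadd : Integrable (fun x : ℝ => heatKernel a x y * heatKernel a x y
      + heatKernel b x z * heatKernel b x z) :=
    (hk_mul_integrable ha ha y y).add (hk_mul_integrable hb hb z z)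
  rw [integral_sub hadd ((hk_mul_integrable ha hb y z).const_mul 2),
    integral_add (hk_mul_integrable ha ha y y) (hk_mul_integrable hb hb z z),
    integral_const_mul, hk_mul_integral ha ha y y, hk_mul_integral hb hb z z,
    hk_mul_integral ha hb y z]
  rw [show y - y = 0 by ring, show z - z = 0 by ring]
  norm_num
  rw [show 2 * π * (a + a) = 4 * π * a by ring, show 2 * π * (b + b) = 4 * π * b by ring]

lemma inner_eq_mixed {a b : ℝ} (ha : 0 < a) (hb : b ≤ 0) (y z : ℝ) :
    ∫ x : ℝ, (heatKernel a x y - heatKernel b x z) ^ 2 = 1 / Real.sqrt (4 * π * a) := by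
  have hb' : ∀ x, heatKernel b x z = 0 := fun x => if_neg (not_lt.mpr hb)
  have hE : ∀ x : ℝ, (heatKernel a x y - heatKernel b x z) ^ 2
      = heatKernel a x y * heatKernel a x y := by intro x; rw [hb']; ring
  simp_rw [hE]
  rw [hk_mul_integral ha ha y y, show y - y = 0 by ring]
  norm_num
  rw [show 2 * π * (a + a) = 4 * π * a by ring]

lemma inner_eq_zero {a b : ℝ} (ha : a ≤ 0) (hb : b ≤ 0) (y z : ℝ) :
    ∫ x : ℝ, (heatKernel a x y - heatKernel b x z) ^ 2 = 0 := by
  have hE : ∀ x : ℝ, (heatKernel a x y - heatKernel b x z) ^ 2 = 0 := by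
    intro x
    simp only [heatKernel, if_neg (not_lt.mpr ha), if_neg (not_lt.mpr hb)]
    ring
  simp_rw [hE, integral_zero]

lemma one_div_sqrt_eq_rpow (x : ℝ) : 1 / Real.sqrt x = x ^ (-(1/2) : ℝ) := by
  rcases lt_trichotomy x 0 with hx | hx | hx
  · rw [Real.sqrt_eq_zero_of_nonpos hx.le, div_zero, Real.rpow_def_of_neg hx]
    rw [show (-(1/2) : ℝ) * π = -(π/2) by ring, Real.cos_neg, Real.cos_pi_div_two, mul_zero]
  · simp [hx]
  · rw [Real.rpow_neg hx.le, ← Real.sqrt_eq_rpow, one_div]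

lemma II_one_div_sqrt_sub (p A B : ℝ) :
    IntervalIntegrable (fun s => 1 / Real.sqrt (p - s)) volume A B := by
  have h : IntervalIntegrable (fun x : ℝ => x ^ (-(1/2) : ℝ)) volume (p - A) (p - B) :=
    intervalIntegral.intervalIntegrable_rpow' (by norm_num)
  have h2 := h.comp_sub_left p
  simp only [sub_sub_cancel] at h2
  simpa only [one_div_sqrt_eq_rpow] using h2

lemma II_one_div_sqrt_sub2 (p A B : ℝ) :
    IntervalIntegrable (fun s => 1 / Real.sqrt (p - 2 * s)) volume A B := by
  have h := (II_one_div_sqrt_sub p (2 * A) (2 * B)).comp_mul_left (c := 2)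
  simpa using h

lemma sqrt_four_pi_mul (u : ℝ) : Real.sqrt (4 * π * u) = 2 * Real.sqrt π * Real.sqrt u := by
  rw [show (4 : ℝ) * π * u = 2 ^ 2 * (π * u) by ring, Real.sqrt_mul (by positivity),
    Real.sqrt_sq (by norm_num : (0:ℝ) ≤ 2), Real.sqrt_mul Real.pi_pos.le, mul_assoc]

lemma sqrt_two_pi_mul (u : ℝ) : Real.sqrt (2 * π * u) = Real.sqrt (2 * π) * Real.sqrt u :=
  Real.sqrt_mul (by positivity) u

lemma ftc_one_div_sqrt {p A B : ℝ} (h : A ≤ B) (hp : B ≤ p) :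
    ∫ s in A..B, 1 / Real.sqrt (p - s) = 2 * (Real.sqrt (p - A) - Real.sqrt (p - B)) := by
  have key : ∫ s in A..B, 1 / Real.sqrt (p - s)
      = (fun s => -2 * Real.sqrt (p - s)) B - (fun s => -2 * Real.sqrt (p - s)) A := by
    apply intervalIntegral.integral_eq_sub_of_hasDerivAt_of_le h
    · exact (continuous_const.mul
        (Real.continuous_sqrt.comp (continuous_const.sub continuous_id))).continuousOn
    · intro x hx
      have hpx : p - x ≠ 0 := by
        have : x < p := lt_of_lt_of_le hx.2 hp
        intro hc; linarith [sub_eq_zero.mp hc]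
      have h1 : HasDerivAt (fun s : ℝ => p - s) (-1) x := by
        simpa using (hasDerivAt_id x).const_sub p
      have h2 : HasDerivAt (fun s : ℝ => Real.sqrt (p - s))
          (1 / (2 * Real.sqrt (p - x)) * (-1)) x :=
        (Real.hasDerivAt_sqrt hpx).comp x h1
      have h3 := h2.const_mul (-2 : ℝ)
      convert h3 using 1
      · rfl
      have hs : Real.sqrt (p - x) ≠ 0 := by
        have : 0 < p - x := by have : x < p := lt_of_lt_of_le hx.2 hp; linarith
        positivity
      field_simp
    · exact II_one_div_sqrt_sub p A B
  rw [key]; ring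

lemma ftc_one_div_sqrt2 {p A B : ℝ} (h : A ≤ B) (hp : 2 * B ≤ p) :
    ∫ s in A..B, 1 / Real.sqrt (p - 2 * s) = Real.sqrt (p - 2 * A) - Real.sqrt (p - 2 * B) := by
  have key : ∫ s in A..B, 1 / Real.sqrt (p - 2 * s)
      = (fun s => -Real.sqrt (p - 2 * s)) B - (fun s => -Real.sqrt (p - 2 * s)) A := by
    apply intervalIntegral.integral_eq_sub_of_hasDerivAt_of_le h
    · exact ((Real.continuous_sqrt.comp
        (continuous_const.sub (continuous_const.mul continuous_id))).neg.continuousOn)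
    · intro x hx
      have hpx : p - 2 * x ≠ 0 := by
        have : 2 * x < p := by nlinarith [hx.2]
        intro hc; linarith [sub_eq_zero.mp hc]
      have h1 : HasDerivAt (fun s : ℝ => p - 2 * s) (-2) x := by
        simpa using ((hasDerivAt_id x).const_mul (2:ℝ)).const_sub p
      have h2 : HasDerivAt (fun s : ℝ => Real.sqrt (p - 2 * s))
          (1 / (2 * Real.sqrt (p - 2 * x)) * (-2)) x :=
        (Real.hasDerivAt_sqrt hpx).comp x h1
      have h3 := h2.neg
      convert h3 using 1
      · rfl
      have hs : Real.sqrt (p - 2 * x) ≠ 0 := by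
        have : 0 < p - 2 * x := by nlinarith [hx.2]
        positivity
      field_simp
    · exact II_one_div_sqrt_sub2 p A B
  rw [key]; ring

lemma ftc_inv_mul_sqrt2 {p A B : ℝ} (h : A ≤ B) (hp : 2 * B < p) :
    ∫ s in A..B, 1 / ((p - 2 * s) * Real.sqrt (p - 2 * s))
      = 1 / Real.sqrt (p - 2 * B) - 1 / Real.sqrt (p - 2 * A) := by
  have hpos : ∀ x ∈ Set.Icc A B, 0 < p - 2 * x := by
    intro x hx; nlinarith [hx.2]
  have key : ∫ s in A..B, 1 / ((p - 2 * s) * Real.sqrt (p - 2 * s))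
      = (fun s => 1 / Real.sqrt (p - 2 * s)) B - (fun s => 1 / Real.sqrt (p - 2 * s)) A := by
    apply intervalIntegral.integral_eq_sub_of_hasDerivAt_of_le h
    · apply ContinuousOn.div continuousOn_const
      · exact (Real.continuous_sqrt.comp
          (continuous_const.sub (continuous_const.mul continuous_id))).continuousOn
      · intro x hx
        have := hpos x hx
        positivity
    · intro x hx
      have hx0 : 0 < p - 2 * x := hpos x (Set.mem_Icc.mpr ⟨hx.1.le, hx.2.le⟩)
      have h1 : HasDerivAt (fun s : ℝ => p - 2 * s) (-2) x := by
        simpa using ((hasDerivAt_id x).const_mul (2:ℝ)).const_sub p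
      have h2 : HasDerivAt (fun s : ℝ => Real.sqrt (p - 2 * s))
          (1 / (2 * Real.sqrt (p - 2 * x)) * (-2)) x :=
        (Real.hasDerivAt_sqrt (ne_of_gt hx0)).comp x h1
      have hs : Real.sqrt (p - 2 * x) ≠ 0 := by positivity
      have h3 : HasDerivAt (fun s : ℝ => 1 / Real.sqrt (p - 2 * s))
          (-(1 / (2 * Real.sqrt (p - 2 * x)) * (-2)) / (Real.sqrt (p - 2 * x)) ^ 2) x := by
        simpa [one_div] using h2.fun_inv hs
      convert h3 using 1
      · rfl
      · rfl
      rw [Real.sq_sqrt hx0.le]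
      field_simp
    · apply ContinuousOn.intervalIntegrable
      rw [Set.uIcc_of_le h]
      apply ContinuousOn.div continuousOn_const
      · exact (continuous_const.sub (continuous_const.mul continuous_id)).continuousOn.mul
          (Real.continuous_sqrt.comp
            (continuous_const.sub (continuous_const.mul continuous_id))).continuousOn
      · intro x hx
        have := hpos x hx
        positivity
  rw [key]

noncomputable def h1f (p : ℝ) : ℝ → ℝ := fun s => 1 / Real.sqrt (4 * π * (p - s))

noncomputable def h4f (t r : ℝ) : ℝ → ℝ := fun s => 2 * (1 / Real.sqrt (2 * π * (t + r - 2 * s)))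

noncomputable def h3f (t r y z : ℝ) : ℝ → ℝ := fun s =>
  2 * ((1 / Real.sqrt (2 * π * (t + r - 2 * s))) * Real.exp (-(y - z) ^ 2 / (2 * (t + r - 2 * s))))

noncomputable def h5f (t r y z : ℝ) : ℝ → ℝ := fun s =>
  h4f t r s * (1 - Real.exp (-(y - z) ^ 2 / (2 * (t + r - 2 * s))))

lemma h1f_eq (p : ℝ) : h1f p = fun s => (1 / (2 * Real.sqrt π)) * (1 / Real.sqrt (p - s)) := by
  funext s
  rw [h1f, sqrt_four_pi_mul, ← one_div_mul_one_div]

lemma h4f_eq (t r : ℝ) :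
    h4f t r = fun s => (2 / Real.sqrt (2 * π)) * (1 / Real.sqrt (t + r - 2 * s)) := by
  funext s
  rw [h4f, sqrt_two_pi_mul, ← one_div_mul_one_div]
  ring

lemma h1f_zero {p s : ℝ} (h : p ≤ s) : h1f p s = 0 := by
  have : 4 * π * (p - s) ≤ 0 :=
    mul_nonpos_of_nonneg_of_nonpos (by positivity) (by linarith)
  rw [h1f, Real.sqrt_eq_zero_of_nonpos this, div_zero]

lemma II_h1f (p A B : ℝ) : IntervalIntegrable (h1f p) volume A B := by
  rw [h1f_eq]
  exact (II_one_div_sqrt_sub p A B).const_mul _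

lemma II_h4f (t r A B : ℝ) : IntervalIntegrable (h4f t r) volume A B := by
  rw [h4f_eq]
  exact (II_one_div_sqrt_sub2 (t + r) A B).const_mul _

lemma h4f_nonneg (t r s : ℝ) : 0 ≤ h4f t r s := by
  rw [h4f]; positivity

lemma meas_h3f (t r y z : ℝ) : Measurable (h3f t r y z) := by
  unfold h3f
  have m1 : Measurable fun s : ℝ => 2 * π * (t + r - 2 * s) :=
    (measurable_const.sub (measurable_id.const_mul 2)).const_mul (2 * π)
  have m2 : Measurable fun s : ℝ => 1 / Real.sqrt (2 * π * (t + r - 2 * s)) :=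
    measurable_const.div (Real.continuous_sqrt.measurable.comp m1)
  have m3 : Measurable fun s : ℝ => -(y - z) ^ 2 / (2 * (t + r - 2 * s)) :=
    measurable_const.div ((measurable_const.sub (measurable_id.const_mul 2)).const_mul 2)
  exact (m2.mul (Real.measurable_exp.comp m3)).const_mul 2

lemma meas_h5f (t r y z : ℝ) : Measurable (h5f t r y z) := by
  unfold h5f h4f
  have m1 : Measurable fun s : ℝ => 2 * π * (t + r - 2 * s) :=
    (measurable_const.sub (measurable_id.const_mul 2)).const_mul (2 * π)
  have m2 : Measurable fun s : ℝ => 1 / Real.sqrt (2 * π * (t + r - 2 * s)) :=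
    measurable_const.div (Real.continuous_sqrt.measurable.comp m1)
  have m3 : Measurable fun s : ℝ => -(y - z) ^ 2 / (2 * (t + r - 2 * s)) :=
    measurable_const.div ((measurable_const.sub (measurable_id.const_mul 2)).const_mul 2)
  exact (m2.const_mul 2).mul (measurable_const.sub (Real.measurable_exp.comp m3))

lemma II_inv_mul_sqrt {p A B : ℝ} (h : A ≤ B) (hp : 2 * B < p) :
    IntervalIntegrable (fun s => 1 / ((p - 2 * s) * Real.sqrt (p - 2 * s))) volume A B := by
  have hpos : ∀ x ∈ Set.Icc A B, 0 < p - 2 * x := by intro x hx; nlinarith [hx.2]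
  apply ContinuousOn.intervalIntegrable
  rw [Set.uIcc_of_le h]
  apply ContinuousOn.div continuousOn_const
  · exact (continuous_const.sub (continuous_const.mul continuous_id)).continuousOn.mul
      (Real.continuous_sqrt.comp
        (continuous_const.sub (continuous_const.mul continuous_id))).continuousOn
  · intro x hx
    have := hpos x hx
    positivity

lemma h5f_le_h4f (t r y z s : ℝ) : h5f t r y z s ≤ h4f t r s := by
  rw [h5f]
  nth_rewrite 2 [show h4f t r s = h4f t r s * 1 by ring]
  exact mul_le_mul_of_nonneg_left (by linarith [Real.exp_pos (-(y - z) ^ 2 / (2 * (t + r - 2 * s)))])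
    (h4f_nonneg t r s)

lemma h5f_nonneg {t r y z s : ℝ} (h : 2 * s ≤ t + r) : 0 ≤ h5f t r y z s := by
  rw [h5f]
  apply mul_nonneg (h4f_nonneg t r s)
  rcases eq_or_lt_of_le (by linarith : (0:ℝ) ≤ t + r - 2 * s) with hu | hu
  · rw [← hu, mul_zero, div_zero, Real.exp_zero]; norm_num
  · have : -(y - z) ^ 2 / (2 * (t + r - 2 * s)) ≤ 0 := by
      apply div_nonpos_of_nonpos_of_nonneg (neg_nonpos.mpr (sq_nonneg _)) (by linarith)
    linarith [Real.exp_le_one_iff.mpr this]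

lemma h5f_le_g {t r y z s : ℝ} (h : 0 < t + r - 2 * s) :
    h5f t r y z s ≤ (1 / Real.sqrt (2 * π)) * ((y - z) ^ 2
      * (1 / ((t + r - 2 * s) * Real.sqrt (t + r - 2 * s)))) := by
  set u := t + r - 2 * s with hu
  have hsu : 0 < Real.sqrt u := Real.sqrt_pos.mpr h
  have hexp : 1 - Real.exp (-(y - z) ^ 2 / (2 * u)) ≤ (y - z) ^ 2 / (2 * u) := by
    have := Real.add_one_le_exp (-((y - z) ^ 2 / (2 * u)))
    rw [neg_div] at *
    linarith
  have h4 : h4f t r s = 2 * (1 / (Real.sqrt (2 * π) * Real.sqrt u)) := by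
    rw [h4f, sqrt_two_pi_mul]
  calc h5f t r y z s ≤ h4f t r s * ((y - z) ^ 2 / (2 * u)) := by
        rw [h5f]
        exact mul_le_mul_of_nonneg_left hexp (h4f_nonneg t r s)
    _ = (1 / Real.sqrt (2 * π)) * ((y - z) ^ 2 * (1 / (u * Real.sqrt u))) := by
        rw [h4]
        field_simp

lemma II_h5f {r t : ℝ} (hr : 0 ≤ r) (hrt : r ≤ t) (y z : ℝ) :
    IntervalIntegrable (h5f t r y z) volume 0 r := by
  apply (II_h4f t r 0 r).mono_fun ((meas_h5f t r y z).aestronglyMeasurable.restrict)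
  rw [Set.uIoc_of_le hr]
  filter_upwards [ae_restrict_mem measurableSet_Ioc] with s hs
  have h2s : 2 * s ≤ t + r := by linarith [hs.2]
  rw [Real.norm_eq_abs, Real.norm_eq_abs, abs_of_nonneg (h5f_nonneg h2s),
    abs_of_nonneg (h4f_nonneg t r s)]
  exact h5f_le_h4f t r y z s

lemma h5f_int_bound {r t : ℝ} (hr : 0 ≤ r) (hrt : r ≤ t) (y z : ℝ) :
    ∫ s in (0:ℝ)..r, h5f t r y z s ≤ (3 / Real.sqrt (2 * π)) * |y - z| := by
  have hd2 : (0:ℝ) ≤ (y - z) ^ 2 := sq_nonneg _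
  have hsqrt2pi : 0 < Real.sqrt (2 * π) := Real.sqrt_pos.mpr (by positivity)
  rcases eq_or_ne y z with hyz | hyz
  · have : ∀ s : ℝ, h5f t r y z s = 0 := by
      intro s
      rw [h5f, hyz]
      simp
    simp only [this, intervalIntegral.integral_zero]
    positivity
  have habs : 0 < |y - z| := abs_pos.mpr (sub_ne_zero.mpr hyz)
  have hd2pos : 0 < (y - z) ^ 2 := by nlinarith [habs, sq_abs (y - z)]
  have hsq : Real.sqrt ((y - z) ^ 2) = |y - z| := Real.sqrt_sq_eq_abs _
  have hII5 := II_h5f hr hrt y z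
  have h4val : ∀ B, 0 ≤ B → B ≤ r → ∫ s in B..r, h4f t r s
      = (2 / Real.sqrt (2 * π)) * (Real.sqrt (t + r - 2 * B) - Real.sqrt (t - r)) := by
    intro B hB0 hBr
    rw [h4f_eq, intervalIntegral.integral_const_mul, ftc_one_div_sqrt2 hBr (by linarith)]
    rw [show t + r - 2 * r = t - r by ring]
  rcases le_or_gt (t + r) ((y - z) ^ 2) with hA | hA
  · -- case A : t + r ≤ d²
    have : ∫ s in (0:ℝ)..r, h5f t r y z s ≤ ∫ s in (0:ℝ)..r, h4f t r s :=
      intervalIntegral.integral_mono_on hr hII5 (II_h4f t r 0 r)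
        (fun s _ => h5f_le_h4f t r y z s)
    have h2 := h4val 0 le_rfl hr
    rw [show t + r - 2 * 0 = t + r by ring] at h2
    have h3 : Real.sqrt (t + r) ≤ |y - z| := by
      rw [← hsq]; exact Real.sqrt_le_sqrt hA
    have h4 : 0 ≤ Real.sqrt (t - r) := Real.sqrt_nonneg _
    calc ∫ s in (0:ℝ)..r, h5f t r y z s ≤ (2 / Real.sqrt (2 * π))
          * (Real.sqrt (t + r) - Real.sqrt (t - r)) := by rw [← h2]; exact this
      _ ≤ (3 / Real.sqrt (2 * π)) * |y - z| := by
          have c1 : (0:ℝ) ≤ 2 / Real.sqrt (2 * π) := by positivity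
          have c2 : 2 / Real.sqrt (2 * π) ≤ 3 / Real.sqrt (2 * π) :=
            (div_le_div_iff_of_pos_right hsqrt2pi).mpr (by norm_num)
          nlinarith
  -- now (y-z)² < t + r
  have hgle : ∀ B, 0 ≤ B → B ≤ r → 2 * B < t + r →
      (∫ s in (0:ℝ)..B, h5f t r y z s) ≤ (1 / Real.sqrt (2 * π))
        * ((y - z) ^ 2 * (1 / Real.sqrt (t + r - 2 * B) - 1 / Real.sqrt (t + r))) := by
    intro B hB0 hBr hB
    have hsub : Set.uIcc (0:ℝ) B ⊆ Set.uIcc (0:ℝ) r := by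
      rw [Set.uIcc_of_le hB0, Set.uIcc_of_le hr]
      exact Set.Icc_subset_Icc le_rfl hBr
    have mono : (∫ s in (0:ℝ)..B, h5f t r y z s) ≤ ∫ s in (0:ℝ)..B,
        (1 / Real.sqrt (2 * π)) * ((y - z) ^ 2
          * (1 / ((t + r - 2 * s) * Real.sqrt (t + r - 2 * s)))) := by
      apply intervalIntegral.integral_mono_on hB0 (hII5.mono_set hsub)
        (((II_inv_mul_sqrt hB0 hB).const_mul _).const_mul _)
      intro s hs
      have : 0 < t + r - 2 * s := by nlinarith [hs.2]
      exact h5f_le_g this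
    calc (∫ s in (0:ℝ)..B, h5f t r y z s) ≤ _ := mono
      _ = (1 / Real.sqrt (2 * π))
        * ((y - z) ^ 2 * (1 / Real.sqrt (t + r - 2 * B) - 1 / Real.sqrt (t + r))) := by
          rw [intervalIntegral.integral_const_mul, intervalIntegral.integral_const_mul,
            ftc_inv_mul_sqrt2 hB0 hB, show t + r - 2 * 0 = t + r by ring]
  have hdiv : (y - z) ^ 2 / Real.sqrt ((y - z) ^ 2) = |y - z| := by
    rw [Real.div_sqrt, hsq]
  rcases le_or_gt ((y - z) ^ 2) (t - r) with hB | hB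
  · -- case B : d² ≤ t - r
    have hrt' : 2 * r < t + r := by nlinarith
    have key := hgle r hr le_rfl hrt'
    rw [show t + r - 2 * r = t - r by ring] at key
    have hs1 : 0 < Real.sqrt (t - r) := Real.sqrt_pos.mpr (by nlinarith)
    have hs2 : Real.sqrt ((y - z) ^ 2) ≤ Real.sqrt (t - r) := Real.sqrt_le_sqrt hB
    have hs3 : (y - z) ^ 2 / Real.sqrt (t - r) ≤ (y - z) ^ 2 / Real.sqrt ((y - z) ^ 2) :=
      div_le_div_of_nonneg_left hd2 (Real.sqrt_pos.mpr hd2pos) hs2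
    rw [hdiv] at hs3
    have hs4 : 0 < Real.sqrt (t + r) := Real.sqrt_pos.mpr (by nlinarith)
    have hs5 : (0:ℝ) ≤ 1 / Real.sqrt (t + r) := by positivity
    calc (∫ s in (0:ℝ)..r, h5f t r y z s)
        ≤ (1 / Real.sqrt (2 * π)) * ((y - z) ^ 2
            * (1 / Real.sqrt (t - r) - 1 / Real.sqrt (t + r))) := key
      _ ≤ (1 / Real.sqrt (2 * π)) * |y - z| := by
          have expand : (y - z) ^ 2 * (1 / Real.sqrt (t - r) - 1 / Real.sqrt (t + r))
              ≤ |y - z| := by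
            have : (y - z) ^ 2 * (1 / Real.sqrt (t - r)) = (y - z) ^ 2 / Real.sqrt (t - r) := by
              ring
            nlinarith
          have : (0:ℝ) ≤ 1 / Real.sqrt (2 * π) := by positivity
          nlinarith [abs_nonneg (y - z)]
      _ ≤ (3 / Real.sqrt (2 * π)) * |y - z| := by
          apply mul_le_mul_of_nonneg_right _ (abs_nonneg (y - z))
          exact (div_le_div_iff_of_pos_right hsqrt2pi).mpr (by norm_num)
  · -- case C : t - r < d² < t + r
    set σ := (t + r - (y - z) ^ 2) / 2 with hσ
    have hσ0 : 0 < σ := by rw [hσ]; linarith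
    have hσr : σ < r := by rw [hσ]; linarith
    have huσ : t + r - 2 * σ = (y - z) ^ 2 := by rw [hσ]; ring
    have hsub1 : Set.uIcc (0:ℝ) σ ⊆ Set.uIcc (0:ℝ) r := by
      rw [Set.uIcc_of_le hσ0.le, Set.uIcc_of_le hr]
      exact Set.Icc_subset_Icc le_rfl hσr.le
    have hsub2 : Set.uIcc σ r ⊆ Set.uIcc (0:ℝ) r := by
      rw [Set.uIcc_of_le hσr.le, Set.uIcc_of_le hr]
      exact Set.Icc_subset_Icc hσ0.le le_rfl
    have hsplit : (∫ s in (0:ℝ)..r, h5f t r y z s)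
        = (∫ s in (0:ℝ)..σ, h5f t r y z s) + ∫ s in σ..r, h5f t r y z s :=
      (intervalIntegral.integral_add_adjacent_intervals
        (hII5.mono_set hsub1) (hII5.mono_set hsub2)).symm
    have part1 : (∫ s in (0:ℝ)..σ, h5f t r y z s)
        ≤ (1 / Real.sqrt (2 * π)) * |y - z| := by
      have key := hgle σ hσ0.le hσr.le (by rw [hσ]; linarith)
      rw [huσ] at key
      have hs4 : 0 < Real.sqrt (t + r) := Real.sqrt_pos.mpr (by nlinarith)
      have hs5 : (0:ℝ) ≤ 1 / Real.sqrt (t + r) := by positivity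
      have expand : (y - z) ^ 2 * (1 / Real.sqrt ((y - z) ^ 2) - 1 / Real.sqrt (t + r))
          ≤ |y - z| := by
        have h6 : (y - z) ^ 2 * (1 / Real.sqrt ((y - z) ^ 2))
            = (y - z) ^ 2 / Real.sqrt ((y - z) ^ 2) := by ring
        nlinarith [hdiv]
      have hc : (0:ℝ) ≤ 1 / Real.sqrt (2 * π) := by positivity
      calc (∫ s in (0:ℝ)..σ, h5f t r y z s) ≤ _ := key
        _ ≤ (1 / Real.sqrt (2 * π)) * |y - z| :=
            mul_le_mul_of_nonneg_left expand hc
    have part2 : (∫ s in σ..r, h5f t r y z s)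
        ≤ (2 / Real.sqrt (2 * π)) * |y - z| := by
      have mono : (∫ s in σ..r, h5f t r y z s) ≤ ∫ s in σ..r, h4f t r s :=
        intervalIntegral.integral_mono_on hσr.le (hII5.mono_set hsub2)
          (II_h4f t r σ r) (fun s _ => h5f_le_h4f t r y z s)
      have hval := h4val σ hσ0.le hσr.le
      rw [huσ, hsq] at hval
      have hs6 : 0 ≤ Real.sqrt (t - r) := Real.sqrt_nonneg _
      have hc : (0:ℝ) ≤ 2 / Real.sqrt (2 * π) := by positivity
      calc (∫ s in σ..r, h5f t r y z s) ≤ ∫ s in σ..r, h4f t r s := mono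
        _ = (2 / Real.sqrt (2 * π)) * (|y - z| - Real.sqrt (t - r)) := hval
        _ ≤ (2 / Real.sqrt (2 * π)) * |y - z| := by nlinarith
    calc (∫ s in (0:ℝ)..r, h5f t r y z s)
        = (∫ s in (0:ℝ)..σ, h5f t r y z s) + ∫ s in σ..r, h5f t r y z s := hsplit
      _ ≤ (1 / Real.sqrt (2 * π)) * |y - z| + (2 / Real.sqrt (2 * π)) * |y - z| := by
          linarith
      _ = (3 / Real.sqrt (2 * π)) * |y - z| := by ring

lemma sqrt_add_le_sqrt_two_mul {t r : ℝ} (ht : 0 ≤ t) (hr : 0 ≤ r) :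
    Real.sqrt t + Real.sqrt r ≤ Real.sqrt 2 * Real.sqrt (t + r) := by
  rw [← Real.sqrt_mul (by norm_num : (0:ℝ) ≤ 2)]
  rw [show Real.sqrt t + Real.sqrt r
    = Real.sqrt ((Real.sqrt t + Real.sqrt r) ^ 2) from (Real.sqrt_sq (by positivity)).symm]
  apply Real.sqrt_le_sqrt
  nlinarith [sq_nonneg (Real.sqrt t - Real.sqrt r), Real.sq_sqrt ht, Real.sq_sqrt hr,
    Real.sqrt_nonneg t, Real.sqrt_nonneg r]

set_option maxHeartbeats 1000000 in
/-- There is a constant `C > 0` such that for all `0 ≤ r ≤ t` and all `y, z ∈ ℝ`,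
`∫₀ᵗ ∫_ℝ (G(t−s,x,y) − G(r−s,x,z))² dx ds ≤ C (√(t−r) + |y−z|)`. -/
theorem heatKernel_space_time_L2_modulus :
    ∃ C > (0 : ℝ), ∀ r t : ℝ, 0 ≤ r → r ≤ t → ∀ y z : ℝ,
      (∫ s in (0:ℝ)..t, ∫ x : ℝ, (heatKernel (t - s) x y - heatKernel (r - s) x z) ^ 2) ≤
        C * (Real.sqrt (t - r) + |y - z|) := by
  refine ⟨2, by norm_num, ?_⟩
  intro r t hr hrt y z
  have ht : 0 ≤ t := hr.trans hrt
  -- Step 1: rewrite the inner integral explicitly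
  have step1 : (∫ s in (0:ℝ)..t, ∫ x : ℝ, (heatKernel (t - s) x y - heatKernel (r - s) x z) ^ 2)
      = ∫ s in (0:ℝ)..t, (h1f t s + h1f r s - (if s < r then h3f t r y z s else 0)) := by
    apply intervalIntegral.integral_congr
    rw [Set.uIcc_of_le ht]
    intro s hs
    simp only
    rcases lt_or_ge s r with hsr | hsr
    · have hb : 0 < r - s := by linarith
      have ha : 0 < t - s := by linarith [hs.2]
      rw [if_pos hsr, inner_eq_pos ha hb y z, show t - s + (r - s) = t + r - 2 * s by ring]
      simp only [h1f, h3f]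
    · rw [if_neg (not_lt.mpr hsr)]
      have hb : r - s ≤ 0 := by linarith
      have h2 : h1f r s = 0 := h1f_zero (by linarith)
      rcases lt_or_ge s t with hst | hst
      · rw [inner_eq_mixed (by linarith : 0 < t - s) hb y z, h2]
        simp only [h1f]
        ring
      · have ha : t - s ≤ 0 := by linarith
        rw [inner_eq_zero ha hb y z, h2, h1f_zero (by linarith)]
        ring
  -- integrability of the "if" function
  have hif_le : ∀ s : ℝ, s ≤ t →
      ‖(if s < r then h3f t r y z s else 0)‖ ≤ ‖h4f t r s‖ := by
    intro s hst
    rcases lt_or_ge s r with hsr | hsr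
    · rw [if_pos hsr]
      have hu : 0 < t + r - 2 * s := by linarith
      have he : Real.exp (-(y - z) ^ 2 / (2 * (t + r - 2 * s))) ≤ 1 := by
        apply Real.exp_le_one_iff.mpr
        apply div_nonpos_of_nonpos_of_nonneg (neg_nonpos.mpr (sq_nonneg _)) (by linarith)
      have h3nn : 0 ≤ h3f t r y z s := by
        rw [h3f]; positivity
      rw [Real.norm_eq_abs, Real.norm_eq_abs, abs_of_nonneg h3nn,
        abs_of_nonneg (h4f_nonneg t r s)]
      rw [h3f, h4f]
      have hpos : (0:ℝ) ≤ 2 * (1 / Real.sqrt (2 * π * (t + r - 2 * s))) := by positivity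
      calc 2 * ((1 / Real.sqrt (2 * π * (t + r - 2 * s)))
            * Real.exp (-(y - z) ^ 2 / (2 * (t + r - 2 * s))))
          = (2 * (1 / Real.sqrt (2 * π * (t + r - 2 * s))))
            * Real.exp (-(y - z) ^ 2 / (2 * (t + r - 2 * s))) := by ring
        _ ≤ (2 * (1 / Real.sqrt (2 * π * (t + r - 2 * s)))) * 1 :=
            mul_le_mul_of_nonneg_left he hpos
        _ = 2 * (1 / Real.sqrt (2 * π * (t + r - 2 * s))) := by ring
    · rw [if_neg (not_lt.mpr hsr)]
      simp [norm_nonneg]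
  have meas_if : Measurable (fun s => if s < r then h3f t r y z s else 0) := by
    exact Measurable.ite measurableSet_Iio (meas_h3f t r y z) measurable_const
  have IIif : IntervalIntegrable (fun s => if s < r then h3f t r y z s else 0) volume 0 t := by
    apply (II_h4f t r 0 t).mono_fun meas_if.aestronglyMeasurable.restrict
    rw [Set.uIoc_of_le ht]
    filter_upwards [ae_restrict_mem measurableSet_Ioc] with s hs
    exact hif_le s hs.2
  -- split the integral
  have hadd : IntervalIntegrable (fun s => h1f t s + h1f r s) volume 0 t :=
    (II_h1f t 0 t).add (II_h1f r 0 t)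
  have step2 : (∫ s in (0:ℝ)..t, (h1f t s + h1f r s - (if s < r then h3f t r y z s else 0)))
      = (∫ s in (0:ℝ)..t, h1f t s) + (∫ s in (0:ℝ)..t, h1f r s)
        - ∫ s in (0:ℝ)..t, (if s < r then h3f t r y z s else 0) := by
    rw [intervalIntegral.integral_sub hadd IIif,
      intervalIntegral.integral_add (II_h1f t 0 t) (II_h1f r 0 t)]
  -- value of ∫ h1f t
  have val1 : (∫ s in (0:ℝ)..t, h1f t s) = (1 / (2 * Real.sqrt π)) * (2 * Real.sqrt t) := by
    rw [h1f_eq, intervalIntegral.integral_const_mul, ftc_one_div_sqrt ht le_rfl,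
      sub_self, Real.sqrt_zero, sub_zero, sub_zero]
  -- value of ∫ h1f r over [0,t]
  have val2 : (∫ s in (0:ℝ)..t, h1f r s) = (1 / (2 * Real.sqrt π)) * (2 * Real.sqrt r) := by
    rw [← intervalIntegral.integral_add_adjacent_intervals (II_h1f r 0 r) (II_h1f r r t)]
    have hz : (∫ s in r..t, h1f r s) = 0 := by
      rw [intervalIntegral.integral_congr (g := fun _ => (0:ℝ))
        (fun s hs => h1f_zero (by rw [Set.uIcc_of_le hrt] at hs; exact hs.1))]
      simp
    rw [hz, add_zero, h1f_eq, intervalIntegral.integral_const_mul,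
      ftc_one_div_sqrt hr le_rfl, sub_self, Real.sqrt_zero, sub_zero, sub_zero]
  -- value of ∫ if over [0,t]
  have val3 : (∫ s in (0:ℝ)..t, (if s < r then h3f t r y z s else 0))
      = (∫ s in (0:ℝ)..r, h4f t r s) - ∫ s in (0:ℝ)..r, h5f t r y z s := by
    have hsub1 : Set.uIcc (0:ℝ) r ⊆ Set.uIcc (0:ℝ) t := by
      rw [Set.uIcc_of_le hr, Set.uIcc_of_le ht]
      exact Set.Icc_subset_Icc le_rfl hrt
    have hsub2 : Set.uIcc r t ⊆ Set.uIcc (0:ℝ) t := by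
      rw [Set.uIcc_of_le hrt, Set.uIcc_of_le ht]
      exact Set.Icc_subset_Icc hr le_rfl
    rw [← intervalIntegral.integral_add_adjacent_intervals (IIif.mono_set hsub1)
      (IIif.mono_set hsub2)]
    have hz : (∫ s in r..t, (if s < r then h3f t r y z s else 0)) = 0 := by
      rw [intervalIntegral.integral_congr (g := fun _ => (0:ℝ))
        (fun s hs => by
          rw [Set.uIcc_of_le hrt] at hs
          exact if_neg (not_lt.mpr hs.1))]
      simp
    rw [hz, add_zero]
    have hcongr : (∫ s in (0:ℝ)..r, (if s < r then h3f t r y z s else 0))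
        = ∫ s in (0:ℝ)..r, h3f t r y z s := by
      apply intervalIntegral.integral_congr_ae
      have hne : ∀ᵐ x : ℝ, x ≠ r := by
        rw [ae_iff]
        simp only [ne_eq, not_not, Set.setOf_eq_eq_singleton]
        exact measure_singleton r
      filter_upwards [hne] with s hsne hmem
      rw [Set.uIoc_of_le hr] at hmem
      exact if_pos (lt_of_le_of_ne hmem.2 hsne)
    rw [hcongr]
    have h345 : ∀ s : ℝ, h3f t r y z s = h4f t r s - h5f t r y z s := by
      intro s
      rw [h3f, h5f, h4f]
      ring
    rw [intervalIntegral.integral_congr (g := fun s => h4f t r s - h5f t r y z s)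
      (fun s _ => h345 s)]
    rw [intervalIntegral.integral_sub (II_h4f t r 0 r) (II_h5f hr hrt y z)]
  -- value of ∫ h4f over [0,r]
  have val4 : (∫ s in (0:ℝ)..r, h4f t r s)
      = (2 / Real.sqrt (2 * π)) * (Real.sqrt (t + r) - Real.sqrt (t - r)) := by
    rw [h4f_eq, intervalIntegral.integral_const_mul, ftc_one_div_sqrt2 hr (by linarith),
      show t + r - 2 * 0 = t + r by ring, show t + r - 2 * r = t - r by ring]
  have hbound5 := h5f_int_bound hr hrt y z
  -- numeric facts
  have hπ3 := Real.pi_gt_three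
  have hsπ : 0 < Real.sqrt π := Real.sqrt_pos.mpr Real.pi_pos
  have hs2 : 0 < Real.sqrt 2 := Real.sqrt_pos.mpr (by norm_num)
  have hs2π : 0 < Real.sqrt (2 * π) := Real.sqrt_pos.mpr (by positivity)
  have hsplit2π : Real.sqrt (2 * π) = Real.sqrt 2 * Real.sqrt π :=
    Real.sqrt_mul (by norm_num) π
  have h22 : Real.sqrt 2 * Real.sqrt 2 = 2 := Real.mul_self_sqrt (by norm_num)
  have h32 : (3/2 : ℝ) ≤ Real.sqrt (2 * π) := by
    rw [show (3/2:ℝ) = Real.sqrt ((3/2)^2) from (Real.sqrt_sq (by norm_num)).symm]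
    exact Real.sqrt_le_sqrt (by nlinarith)
  have key1 := sqrt_add_le_sqrt_two_mul ht hr
  have hD : 0 ≤ Real.sqrt (t - r) := Real.sqrt_nonneg _
  have hE : 0 ≤ |y - z| := abs_nonneg _
  -- the main chain
  rw [step1, step2, val1, val2, val3, val4]
  have e2 : (1 / (2 * Real.sqrt π)) * (2 * Real.sqrt t)
        + (1 / (2 * Real.sqrt π)) * (2 * Real.sqrt r)
      ≤ (2 / Real.sqrt (2 * π)) * Real.sqrt (t + r) := by
    have lhs_eq : (1 / (2 * Real.sqrt π)) * (2 * Real.sqrt t)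
        + (1 / (2 * Real.sqrt π)) * (2 * Real.sqrt r)
        = (Real.sqrt t + Real.sqrt r) / Real.sqrt π := by
      field_simp
    have rhs_eq : (2 / Real.sqrt (2 * π)) * Real.sqrt (t + r)
        = (Real.sqrt 2 * Real.sqrt (t + r)) / Real.sqrt π := by
      rw [hsplit2π]
      field_simp
      linear_combination (-Real.sqrt (t + r)) * h22
    rw [lhs_eq, rhs_eq]
    exact div_le_div_of_nonneg_right key1 hsπ.le
  have c1 : 2 / Real.sqrt (2 * π) ≤ 2 := by
    rw [div_le_iff₀ hs2π]; nlinarith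
  have c2 : 3 / Real.sqrt (2 * π) ≤ 2 := by
    rw [div_le_iff₀ hs2π]; nlinarith
  have hc1' : (0:ℝ) ≤ 2 / Real.sqrt (2 * π) := by positivity
  calc (1 / (2 * Real.sqrt π)) * (2 * Real.sqrt t)
        + (1 / (2 * Real.sqrt π)) * (2 * Real.sqrt r)
        - ((2 / Real.sqrt (2 * π)) * (Real.sqrt (t + r) - Real.sqrt (t - r))
            - ∫ s in (0:ℝ)..r, h5f t r y z s)
      ≤ (2 / Real.sqrt (2 * π)) * Real.sqrt (t - r)
          + (3 / Real.sqrt (2 * π)) * |y - z| := by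
        rw [mul_sub]
        linarith [e2, hbound5]
    _ ≤ 2 * Real.sqrt (t - r) + 2 * |y - z| := by
        have b1 := mul_le_mul_of_nonneg_right c1 hD
        have b2 := mul_le_mul_of_nonneg_right c2 hE
        linarith
    _ = 2 * (Real.sqrt (t - r) + |y - z|) := by ring
end

section
/- There exists a constant K > 0 such that for all t > 0 and all x, y ∈ ℝ, ∫₀ᵗ ∫_ℝ (G(s,x,z) − G(s,y,z))² dz ds ≤ K·|x−y|. -/
open MeasureTheory Real

lemma gauss_integrable {s : ℝ} (hs : 0 < s) (μ : ℝ) :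
    Integrable (fun z : ℝ => Real.exp (-(z - μ) ^ 2 / s)) := by
  have h0 : Integrable (fun z : ℝ => Real.exp (-s⁻¹ * z ^ 2)) volume :=
    integrable_exp_neg_mul_sq (inv_pos.mpr hs)
  have h := h0.comp_sub_right μ
  refine h.congr (Filter.Eventually.of_forall fun z => ?_)
  simp only
  rw [show -s⁻¹ * (z - μ) ^ 2 = -(z - μ) ^ 2 / s by field_simp]

lemma gauss_int {s : ℝ} (hs : 0 < s) (μ : ℝ) :
    ∫ z : ℝ, Real.exp (-(z - μ) ^ 2 / s) = Real.sqrt (π * s) := by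
  have h1 : ∀ z : ℝ, Real.exp (-(z - μ) ^ 2 / s) = Real.exp (-(1/s) * (z - μ) ^ 2) := by
    intro z; congr 1; field_simp
  simp_rw [h1]
  rw [MeasureTheory.integral_sub_right_eq_self (fun z => Real.exp (-(1/s) * z ^ 2)) μ,
    integral_gaussian]
  congr 1
  field_simp

lemma inner_eq {s : ℝ} (hs : 0 < s) (x y : ℝ) :
    ∫ z : ℝ, (heatKernel s x z - heatKernel s y z) ^ 2
      = (1 / Real.sqrt (π * s)) * (1 - Real.exp (-(x - y) ^ 2 / (4 * s))) := by
  have h2πs : (0:ℝ) < 2 * π * s := by positivity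
  have key : ∀ z : ℝ, (heatKernel s x z - heatKernel s y z) ^ 2
      = (1/(2*π*s)) * (Real.exp (-(z - x) ^ 2 / s) + Real.exp (-(z - y) ^ 2 / s)
          - 2 * Real.exp (-(x-y)^2/(4*s)) * Real.exp (-(z - (x+y)/2) ^ 2 / s)) := by
    intro z
    simp only [heatKernel, if_pos hs]
    have hA : Real.exp (-(x - z)^2/(2*s)) * Real.exp (-(x - z)^2/(2*s))
        = Real.exp (-(z-x)^2/s) := by
      rw [← Real.exp_add]; congr 1; field_simp; ring
    have hB : Real.exp (-(y - z)^2/(2*s)) * Real.exp (-(y - z)^2/(2*s))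
        = Real.exp (-(z-y)^2/s) := by
      rw [← Real.exp_add]; congr 1; field_simp; ring
    have hAB : Real.exp (-(x - z)^2/(2*s)) * Real.exp (-(y - z)^2/(2*s))
        = Real.exp (-(x-y)^2/(4*s)) * Real.exp (-(z-(x+y)/2)^2/s) := by
      rw [← Real.exp_add, ← Real.exp_add]; congr 1; field_simp; ring
    have hc : (1 / Real.sqrt (2*π*s)) * (1 / Real.sqrt (2*π*s)) = 1/(2*π*s) := by
      rw [div_mul_div_comm, one_mul, Real.mul_self_sqrt h2πs.le]
    rw [show ∀ c a b : ℝ, (c*a - c*b)^2 = (c*c)*(a*a) + (c*c)*(b*b) - (2*(c*c))*(a*b) from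
      fun c a b => by ring, hA, hB, hAB, hc]
    ring
  simp_rw [key]
  have i1 := gauss_integrable hs x
  have i2 := gauss_integrable hs y
  have i12 : Integrable (fun z : ℝ =>
      Real.exp (-(z - x) ^ 2 / s) + Real.exp (-(z - y) ^ 2 / s)) := i1.add i2
  have i3 : Integrable (fun z : ℝ =>
      2 * Real.exp (-(x-y)^2/(4*s)) * Real.exp (-(z - (x+y)/2) ^ 2 / s)) :=
    (gauss_integrable hs ((x+y)/2)).const_mul (2 * Real.exp (-(x-y)^2/(4*s)))
  rw [integral_const_mul, MeasureTheory.integral_sub i12 i3,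
    MeasureTheory.integral_add i1 i2, integral_const_mul,
    gauss_int hs, gauss_int hs, gauss_int hs]
  have hsq : Real.sqrt (π * s) * Real.sqrt (π * s) = π * s := Real.mul_self_sqrt (by positivity)
  have hpos : (0:ℝ) < Real.sqrt (π * s) := Real.sqrt_pos.mpr (by positivity)
  rw [show (2:ℝ) * π * s = 2 * (Real.sqrt (π * s) * Real.sqrt (π * s)) by rw [hsq]; ring]
  field_simp
  ring

/-- the closed form of the inner integral -/
noncomputable def innerF (a s : ℝ) : ℝ :=
  (1 / Real.sqrt (π * s)) * (1 - Real.exp (-a ^ 2 / (4 * s)))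

lemma innerF_nonneg {a s : ℝ} (hs : 0 ≤ s) : 0 ≤ innerF a s := by
  rcases eq_or_lt_of_le hs with h | h
  · simp [innerF, ← h]
  · have h1 : Real.exp (-a^2/(4*s)) ≤ 1 := by
      rw [Real.exp_le_one_iff]
      have h0 : 0 ≤ a^2/(4*s) := by positivity
      have heq : -a^2/(4*s) = -(a^2/(4*s)) := by ring
      rw [heq]; linarith
    have h2 : 0 < Real.sqrt (π * s) := Real.sqrt_pos.mpr (by positivity)
    unfold innerF
    apply mul_nonneg (by positivity) (by linarith)

lemma innerF_le_one {a s : ℝ} (hs : 0 ≤ s) :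
    innerF a s ≤ (1 / Real.sqrt π) * s ^ (-(1/2) : ℝ) := by
  rcases eq_or_lt_of_le hs with h | h
  · rw [← h]
    simp [innerF, Real.zero_rpow (by norm_num : (-(1/2) : ℝ) ≠ 0)]
  · have h1 : Real.exp (-a^2/(4*s)) > 0 := Real.exp_pos _
    have h2 : s ^ (-(1/2) : ℝ) = 1 / Real.sqrt s := by
      rw [Real.rpow_neg h.le, Real.sqrt_eq_rpow, one_div]
      norm_num
    have h3 : Real.sqrt (π * s) = Real.sqrt π * Real.sqrt s := Real.sqrt_mul Real.pi_pos.le s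
    have h4 : 0 < Real.sqrt π := Real.sqrt_pos.mpr Real.pi_pos
    have h5 : 0 < Real.sqrt s := Real.sqrt_pos.mpr h
    rw [innerF, h2, h3]
    rw [show (1:ℝ) / (Real.sqrt π * Real.sqrt s) = (1/Real.sqrt π) * (1/Real.sqrt s) by
      rw [div_mul_div_comm, one_mul]]
    have hb : 1 - Real.exp (-a^2/(4*s)) ≤ 1 := by linarith
    have hpos : 0 < (1/Real.sqrt π) * (1/Real.sqrt s) := by positivity
    nlinarith

lemma innerF_le_two {a s : ℝ} (hs : 0 < s) :
    innerF a s ≤ (a^2 / (4 * Real.sqrt π)) * s ^ (-(3/2) : ℝ) := by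
  have h2 : s ^ (-(3/2) : ℝ) = (1 / Real.sqrt s) * (1 / s) := by
    rw [show (-(3/2) : ℝ) = -(1/2) + (-1) by norm_num, Real.rpow_add hs,
      Real.rpow_neg hs.le, Real.sqrt_eq_rpow, Real.rpow_neg_one, one_div, one_div]
    norm_num
  have h3 : Real.sqrt (π * s) = Real.sqrt π * Real.sqrt s := Real.sqrt_mul Real.pi_pos.le s
  have h4 : 0 < Real.sqrt π := Real.sqrt_pos.mpr Real.pi_pos
  have h5 : 0 < Real.sqrt s := Real.sqrt_pos.mpr hs
  have hb : 1 - Real.exp (-a^2/(4*s)) ≤ a^2/(4*s) := by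
    have := Real.add_one_le_exp (-(a^2/(4*s)))
    have heq : -a^2/(4*s) = -(a^2/(4*s)) := by ring
    rw [heq]; linarith
  rw [innerF, h2, h3]
  have key : (1:ℝ) / (Real.sqrt π * Real.sqrt s) * (a^2/(4*s))
      = a^2/(4*Real.sqrt π) * ((1/Real.sqrt s) * (1/s)) := by
    field_simp
  have hpos : (0:ℝ) < 1 / (Real.sqrt π * Real.sqrt s) := by positivity
  nlinarith

lemma innerF_intable {a u v : ℝ} (hu : 0 ≤ u) (huv : u ≤ v) :
    IntervalIntegrable (innerF a) volume u v := by
  rw [intervalIntegrable_iff_integrableOn_Ioc_of_le huv]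
  have hg : IntegrableOn (fun s : ℝ => (1 / Real.sqrt π) * s ^ (-(1/2) : ℝ)) (Set.Ioc u v) := by
    have := (intervalIntegral.intervalIntegrable_rpow' (a := u) (b := v)
      (show (-1:ℝ) < -(1/2) by norm_num)).const_mul (1 / Real.sqrt π)
    rwa [intervalIntegrable_iff_integrableOn_Ioc_of_le huv] at this
  apply hg.mono' ?_ ?_
  · apply Measurable.aestronglyMeasurable
    unfold innerF
    fun_prop
  · filter_upwards [ae_restrict_mem measurableSet_Ioc] with s hsm
    rw [Real.norm_eq_abs, abs_of_nonneg (innerF_nonneg (hu.trans hsm.1.le))]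
    exact innerF_le_one (hu.trans hsm.1.le)

lemma int_half {t : ℝ} (ht : 0 ≤ t) :
    ∫ s in (0:ℝ)..t, (1 / Real.sqrt π) * s ^ (-(1/2) : ℝ) = (2 / Real.sqrt π) * Real.sqrt t := by
  rw [intervalIntegral.integral_const_mul, integral_rpow (Or.inl (by norm_num))]
  rw [show (-(1/2) : ℝ) + 1 = 1/2 by norm_num, Real.zero_rpow (by norm_num : (1/2 : ℝ) ≠ 0)]
  simp only [Real.sqrt_eq_rpow]
  ring

lemma sqrt_pi_ge : (5:ℝ)/4 ≤ Real.sqrt π := by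
  rw [show (5:ℝ)/4 = Real.sqrt ((5/4)^2) by rw [Real.sqrt_sq (by norm_num)]]
  apply Real.sqrt_le_sqrt
  nlinarith [Real.pi_gt_three]

lemma outer_bound {a t : ℝ} (ha : 0 < a) (ht : 0 < t) :
    ∫ s in (0:ℝ)..t, innerF a s ≤ 2 * a := by
  have hπ : (0:ℝ) < Real.sqrt π := Real.sqrt_pos.mpr Real.pi_pos
  have hπ54 := sqrt_pi_ge
  rcases le_or_gt t (a^2) with hta | hta
  · -- t ≤ a², use the s^{-1/2} bound throughout
    have h1 : ∫ s in (0:ℝ)..t, innerF a s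
        ≤ ∫ s in (0:ℝ)..t, (1 / Real.sqrt π) * s ^ (-(1/2) : ℝ) := by
      apply intervalIntegral.integral_mono_on ht.le (innerF_intable le_rfl ht.le)
        ((intervalIntegral.intervalIntegrable_rpow' (by norm_num)).const_mul _)
      intro s hs; exact innerF_le_one hs.1
    have h2 : Real.sqrt t ≤ a := by
      rw [show a = Real.sqrt (a^2) by rw [Real.sqrt_sq ha.le]]
      exact Real.sqrt_le_sqrt hta
    rw [int_half ht.le] at h1
    have hst : 0 ≤ Real.sqrt t := Real.sqrt_nonneg t
    have h6 : 2 / Real.sqrt π ≤ 2 := by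
      rw [div_le_iff₀ hπ]; nlinarith
    nlinarith
  · -- a² < t : split at a²
    have ha2 : (0:ℝ) < a^2 := by positivity
    have hi1 := innerF_intable (a := a) le_rfl ha2.le
    have hi2 := innerF_intable (a := a) ha2.le hta.le
    rw [← intervalIntegral.integral_add_adjacent_intervals hi1 hi2]
    have p1 : ∫ s in (0:ℝ)..(a^2), innerF a s ≤ (2 / Real.sqrt π) * a := by
      have h1 : ∫ s in (0:ℝ)..(a^2), innerF a s
          ≤ ∫ s in (0:ℝ)..(a^2), (1 / Real.sqrt π) * s ^ (-(1/2) : ℝ) := by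
        apply intervalIntegral.integral_mono_on ha2.le hi1
          ((intervalIntegral.intervalIntegrable_rpow' (by norm_num)).const_mul _)
        intro s hs; exact innerF_le_one hs.1
      rw [int_half ha2.le, Real.sqrt_sq ha.le] at h1
      linarith
    have p2 : ∫ s in (a^2)..t, innerF a s ≤ a / (2 * Real.sqrt π) := by
      have hnot : (0:ℝ) ∉ Set.uIcc (a^2) t := by
        rw [Set.uIcc_of_le hta.le]
        exact fun h => absurd h.1 (not_le.mpr ha2)
      have hint32 : IntervalIntegrable (fun s : ℝ => s ^ (-(3/2) : ℝ)) volume (a^2) t :=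
        intervalIntegral.intervalIntegrable_rpow (Or.inr hnot)
      have h1 : ∫ s in (a^2)..t, innerF a s
          ≤ ∫ s in (a^2)..t, (a^2 / (4 * Real.sqrt π)) * s ^ (-(3/2) : ℝ) := by
        apply intervalIntegral.integral_mono_on hta.le hi2 (hint32.const_mul _)
        intro s hs; exact innerF_le_two (lt_of_lt_of_le ha2 hs.1)
      rw [intervalIntegral.integral_const_mul, integral_rpow (Or.inr ⟨by norm_num, hnot⟩)] at h1
      have ha12 : ((a^2 : ℝ)) ^ ((-(3/2) : ℝ) + 1) = 1 / a := by
        rw [show (-(3/2) : ℝ) + 1 = -(1/2) by norm_num, Real.rpow_neg ha2.le,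
          ← Real.sqrt_eq_rpow, Real.sqrt_sq ha.le, one_div]
      rw [ha12] at h1
      have ht12 : (0:ℝ) ≤ t ^ ((-(3/2) : ℝ) + 1) := Real.rpow_nonneg (by linarith) _
      have hV : (t ^ ((-(3/2) : ℝ) + 1) - 1/a) / ((-(3/2) : ℝ) + 1) ≤ 2/a := by
        rw [show (-(3/2) : ℝ) + 1 = -(1/2) by norm_num] at *
        have heq : (t ^ (-(1/2) : ℝ) - 1/a) / (-(1/2) : ℝ)
            = 2 * (1/a - t ^ (-(1/2) : ℝ)) := by ring
        rw [heq]
        calc 2 * (1/a - t ^ (-(1/2) : ℝ)) ≤ 2 * (1/a) := by linarith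
        _ = 2/a := by ring
      have hC : (0:ℝ) ≤ a^2 / (4 * Real.sqrt π) := by positivity
      have h2 : a^2 / (4 * Real.sqrt π) * ((t ^ ((-(3/2) : ℝ) + 1) - 1/a) / ((-(3/2) : ℝ) + 1))
          ≤ a^2 / (4 * Real.sqrt π) * (2/a) := by
        exact mul_le_mul_of_nonneg_left hV hC
      have h3 : a^2 / (4 * Real.sqrt π) * (2/a) = a / (2 * Real.sqrt π) := by
        field_simp; ring
      linarith
    have hfinal : (2 / Real.sqrt π) * a + a / (2 * Real.sqrt π) ≤ 2 * a := by
      have h1 : (2 / Real.sqrt π) * a + a / (2 * Real.sqrt π) = (5 * a) / (2 * Real.sqrt π) := by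
        field_simp; ring
      rw [h1, div_le_iff₀ (by positivity : (0:ℝ) < 2 * Real.sqrt π)]
      nlinarith
    linarith

/-- There is a constant `K > 0` such that for all `t > 0` and all `x, y ∈ ℝ`,
`∫₀ᵗ ∫_ℝ (G(s,x,z) − G(s,y,z))² dz ds ≤ K |x−y|`. -/
theorem heatKernel_spatial_L2_modulus :
    ∃ K > (0 : ℝ), ∀ t > (0 : ℝ), ∀ x y : ℝ,
      (∫ s in (0:ℝ)..t, ∫ z : ℝ, (heatKernel s x z - heatKernel s y z) ^ 2) ≤
        K * |x - y| := by
  refine ⟨2, by norm_num, fun t ht x y => ?_⟩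
  rcases eq_or_ne x y with rfl | hxy
  · simp
  · have ha : 0 < |x - y| := abs_pos.mpr (sub_ne_zero.mpr hxy)
    have hcongr : (∫ s in (0:ℝ)..t, ∫ z : ℝ, (heatKernel s x z - heatKernel s y z) ^ 2)
        = ∫ s in (0:ℝ)..t, innerF |x - y| s := by
      apply intervalIntegral.integral_congr_ae
      refine Filter.Eventually.of_forall fun s hs => ?_
      rw [Set.uIoc_of_le ht.le] at hs
      rw [inner_eq hs.1 x y, innerF, sq_abs]
    rw [hcongr]
    exact outer_bound ha ht
end

section
/- Let T > 0 and C ≥ 0, and let f : [0,T] → [0,∞) be bounded and measurable with f(t) ≤ C·∫₀ᵗ (t−s)^{−1/2}·f(s) ds for all t ∈ [0,T]. Then f(t) = 0 for all t ∈ [0,T]. -/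
open MeasureTheory

lemma sg_kernel_intable {x a b : ℝ} :
    IntervalIntegrable (fun s : ℝ => (x - s) ^ (-(1:ℝ)/2)) volume a b := by
  have h := (intervalIntegral.intervalIntegrable_rpow'
      (a := x - b) (b := x - a) (r := -(1:ℝ)/2) (by norm_num)).comp_sub_left x
  simpa using h.symm

lemma sg_prod_intable {f : ℝ → ℝ} (hmeas : Measurable f) {M : ℝ} (hM : ∀ s, |f s| ≤ M)
    {x a b : ℝ} :
    IntervalIntegrable (fun s : ℝ => (x - s) ^ (-(1:ℝ)/2) * f s) volume a b := by
  have heq : (fun s : ℝ => (x - s) ^ (-(1:ℝ)/2) * f s)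
      = fun s : ℝ => f s * (x - s) ^ (-(1:ℝ)/2) := by funext s; ring
  rw [heq, intervalIntegrable_iff]
  exact ((sg_kernel_intable (x := x) (a := a) (b := b)).def').bdd_mul
      hmeas.aestronglyMeasurable.restrict (c := M) (Filter.Eventually.of_forall fun s => by simpa using hM s)

lemma sg_kernel_integral {a x : ℝ} (hax : a ≤ x) :
    ∫ s in a..x, (x - s) ^ (-(1:ℝ)/2) = 2 * (x - a) ^ ((1:ℝ)/2) := by
  rw [intervalIntegral.integral_comp_sub_left (fun u : ℝ => u ^ (-(1:ℝ)/2)) x]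
  rw [sub_self, integral_rpow (Or.inl (by norm_num))]
  rw [show -(1:ℝ)/2 + 1 = 1/2 by norm_num, Real.zero_rpow (by norm_num)]
  ring

/-- Singular Gronwall lemma: a bounded measurable `f : [0,T] → [0,∞)` satisfying
`f(t) ≤ C ∫₀ᵗ (t−s)^{−1/2} f(s) ds` on `[0,T]` vanishes identically on `[0,T]`. -/
theorem singular_gronwall
    (T C : ℝ) (hT : 0 < T) (hC : 0 ≤ C) (f : ℝ → ℝ)
    (hmeas : Measurable f) (hnonneg : ∀ t, 0 ≤ f t) (hbdd : ∃ M : ℝ, ∀ t, f t ≤ M)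
    (hineq : ∀ t ∈ Set.Icc (0 : ℝ) T,
      f t ≤ C * ∫ s in (0:ℝ)..t, (t - s) ^ (-(1:ℝ)/2) * f s) :
    ∀ t ∈ Set.Icc (0 : ℝ) T, f t = 0 := by
  obtain ⟨M, hM⟩ := hbdd
  have habs : ∀ s, |f s| ≤ M := fun s => abs_le.mpr ⟨by linarith [hnonneg s, hnonneg 0, hM 0], hM s⟩
  set d : ℝ := (4*C+1)⁻¹ with hd
  have hd0 : 0 < d := by positivity
  set δ : ℝ := d^2 with hδ
  have hδ0 : 0 < δ := by positivity
  have key : ∀ n : ℕ, ∀ t ∈ Set.Icc (0:ℝ) T, t ≤ n * δ → f t = 0 := by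
    intro n
    induction n with
    | zero =>
      intro t ht hle
      have ht0 : t = 0 := le_antisymm (by simpa using hle) ht.1
      subst ht0
      have h0 := hineq 0 ⟨le_refl 0, hT.le⟩
      rw [intervalIntegral.integral_same, mul_zero] at h0
      exact le_antisymm h0 (hnonneg 0)
    | succ n ih =>
      intro t ht hle
      rcases le_or_gt t (n * δ) with hcase | hcase
      · exact ih t ht hcase
      set a : ℝ := n * δ with ha
      set b : ℝ := min ((n+1 : ℕ) * δ) T with hb
      have ha0 : 0 ≤ a := by positivity
      have haT : a ≤ T := le_trans hcase.le ht.2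
      have hab : a ≤ b := le_min (by push_cast; nlinarith) haT
      have htab : t ∈ Set.Icc a b := ⟨hcase.le, le_min hle ht.2⟩
      have hba : b - a ≤ δ := by
        have : b ≤ (n+1 : ℕ) * δ := min_le_left _ _
        push_cast at this ⊢
        nlinarith
      set S : ℝ := sSup (f '' Set.Icc a b) with hS
      have hbddS : BddAbove (f '' Set.Icc a b) := by
        refine ⟨M, ?_⟩
        rintro y ⟨x, _, rfl⟩
        exact hM x
      have hfleS : ∀ x ∈ Set.Icc a b, f x ≤ S := fun x hx =>
        le_csSup hbddS (Set.mem_image_of_mem f hx)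
      have hS0 : 0 ≤ S := le_trans (hnonneg a) (hfleS a ⟨le_refl a, hab⟩)
      have hmain : ∀ x ∈ Set.Icc a b, f x ≤ (1/2) * S := by
        intro x hx
        have hax : a ≤ x := hx.1
        have hxT : x ∈ Set.Icc (0:ℝ) T := ⟨le_trans ha0 hax, le_trans hx.2 (min_le_right _ _)⟩
        have h1 := hineq x hxT
        -- the integral over [0, a] vanishes
        have hzero : ∀ s ∈ Set.Icc (0:ℝ) a, f s = 0 := fun s hs =>
          ih s ⟨hs.1, le_trans hs.2 haT⟩ hs.2
        have h0a : (∫ s in (0:ℝ)..a, (x - s) ^ (-(1:ℝ)/2) * f s) = 0 := by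
          rw [intervalIntegral.integral_congr (g := fun _ => (0:ℝ))]
          · simp
          · intro s hs
            rw [Set.uIcc_of_le ha0] at hs
            simp only [hzero s hs, mul_zero]
        have hsplit : (∫ s in (0:ℝ)..x, (x - s) ^ (-(1:ℝ)/2) * f s)
            = ∫ s in a..x, (x - s) ^ (-(1:ℝ)/2) * f s := by
          rw [← intervalIntegral.integral_add_adjacent_intervals
            (sg_prod_intable hmeas habs (x := x) (a := 0) (b := a))
            (sg_prod_intable hmeas habs (x := x) (a := a) (b := x)), h0a, zero_add]
        have h2 : (∫ s in a..x, (x - s) ^ (-(1:ℝ)/2) * f s)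
            ≤ ∫ s in a..x, (x - s) ^ (-(1:ℝ)/2) * S := by
          apply intervalIntegral.integral_mono_on hax
            (sg_prod_intable hmeas habs)
            (sg_kernel_intable.mul_const S)
          intro s hs
          have hker : (0:ℝ) ≤ (x - s) ^ (-(1:ℝ)/2) :=
            Real.rpow_nonneg (sub_nonneg.2 hs.2) _
          exact mul_le_mul_of_nonneg_left
            (hfleS s ⟨hs.1, le_trans hs.2 hx.2⟩) hker
        have h3 : (∫ s in a..x, (x - s) ^ (-(1:ℝ)/2) * S)
            = 2 * (x - a) ^ ((1:ℝ)/2) * S := by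
          rw [intervalIntegral.integral_mul_const, sg_kernel_integral hax]
        have h4 : (x - a) ^ ((1:ℝ)/2) ≤ d := by
          have hle2 : x - a ≤ d^2 := by
            have := hx.2
            nlinarith
          calc (x - a) ^ ((1:ℝ)/2) ≤ (d^2) ^ ((1:ℝ)/2) :=
                Real.rpow_le_rpow (sub_nonneg.2 hax) hle2 (by norm_num)
            _ = d := by
                rw [← Real.rpow_natCast d 2, ← Real.rpow_mul hd0.le]
                norm_num
        have h5 : C * (2 * (x - a) ^ ((1:ℝ)/2) * S) ≤ C * (2 * d * S) := by
          apply mul_le_mul_of_nonneg_left _ hC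
          have hker : (0:ℝ) ≤ (x - a) ^ ((1:ℝ)/2) := Real.rpow_nonneg (sub_nonneg.2 hax) _
          nlinarith
        have h6 : C * (2 * d * S) ≤ (1/2) * S := by
          have hCd : 2 * C * d ≤ 1/2 := by
            have h41 : (0:ℝ) < 4*C+1 := by positivity
            rw [hd, ← div_eq_mul_inv, div_le_iff₀ h41]
            linarith
          nlinarith
        calc f x ≤ C * ∫ s in (0:ℝ)..x, (x - s) ^ (-(1:ℝ)/2) * f s := h1
          _ = C * ∫ s in a..x, (x - s) ^ (-(1:ℝ)/2) * f s := by rw [hsplit]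
          _ ≤ C * (2 * (x - a) ^ ((1:ℝ)/2) * S) := by
              apply mul_le_mul_of_nonneg_left _ hC
              rw [← h3]; exact h2
          _ ≤ C * (2 * d * S) := h5
          _ ≤ (1/2) * S := h6
      have hSle : S ≤ (1/2) * S := by
        apply Real.sSup_le _ (by positivity)
        rintro y ⟨x, hx, rfl⟩
        exact hmain x hx
      have hS0' : S ≤ 0 := by linarith
      have : f t ≤ S := hfleS t htab
      exact le_antisymm (le_trans this hS0') (hnonneg t)
  intro t ht
  obtain ⟨n, hn⟩ := exists_nat_ge (t / δ)
  exact key n t ht ((div_le_iff₀ hδ0).mp hn)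
end
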